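/- arXiv:1608.04814 — 4 statements merged into one kernel-verified Lean document; each statement's English description precedes it below -/
import Mathlib

section
/- (Gentle Measurement lemma.) Let ρ and X be positive semidefinite d × d complex matrices with 0 ≤ X ≤ I. Then ‖ρ − √X ρ √X‖₁ ≤ 2·√(Tr ρ)·√(Tr(ρ(I − X))), where √X denotes the positive semidefinite square root of X and ‖A‖₁ = Tr√(A†A) is the trace norm. -/
open Matrix
open scoped ComplexOrder

/-- The square root of a positive semidefinite matrix (removed from Mathlib; old definition). -/
noncomputable def Matrix.PosSemidef.sqrt {𝕜 : Type*} [RCLike 𝕜] {n : Type*} [Fintype n]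
    [DecidableEq n] {A : Matrix n n 𝕜} (hA : Matrix.PosSemidef A) : Matrix n n 𝕜 :=
  hA.1.eigenvectorUnitary.1 * diagonal ((↑) ∘ (√·) ∘ hA.1.eigenvalues) *
    (star hA.1.eigenvectorUnitary : Matrix n n 𝕜)

/-- The trace norm `‖A‖₁ = Tr √(AᴴA)` of a complex matrix. -/
noncomputable def traceNorm {ι : Type*} [Fintype ι] [DecidableEq ι]
    (A : Matrix ι ι ℂ) : ℝ :=
  ((Matrix.posSemidef_conjTranspose_mul_self A).sqrt.trace).re

section sqrtPort

open scoped MatrixOrder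

lemma Matrix.PosSemidef.sqrt_eq_cfcSqrt {n : Type*} [Fintype n] [DecidableEq n]
    {A : Matrix n n ℂ} (hA : A.PosSemidef) : hA.sqrt = CFC.sqrt A := by
  rw [CFC.sqrt_eq_cfc, cfc_nnreal_eq_real _ A, hA.1.cfc_eq, IsHermitian.cfc,
    Unitary.conjStarAlgAut_apply, Matrix.PosSemidef.sqrt]
  congr 3
  funext i
  simp [Real.coe_sqrt, Real.coe_toNNReal', max_eq_left (hA.eigenvalues_nonneg i)]

lemma Matrix.PosSemidef.posSemidef_sqrt {n : Type*} [Fintype n] [DecidableEq n]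
    {A : Matrix n n ℂ} (hA : A.PosSemidef) : hA.sqrt.PosSemidef := by
  rw [hA.sqrt_eq_cfcSqrt]; exact (CFC.sqrt_nonneg A).posSemidef

lemma Matrix.PosSemidef.sqrt_mul_self {n : Type*} [Fintype n] [DecidableEq n]
    {A : Matrix n n ℂ} (hA : A.PosSemidef) : hA.sqrt * hA.sqrt = A := by
  rw [hA.sqrt_eq_cfcSqrt]; exact CFC.sqrt_mul_sqrt_self A hA.nonneg

lemma Matrix.PosSemidef.eq_sqrt_of_sq_eq {n : Type*} [Fintype n] [DecidableEq n]
    {A B : Matrix n n ℂ} (hA : A.PosSemidef) (hB : B.PosSemidef) (hAB : A ^ 2 = B) :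
    A = hB.sqrt := by
  rw [hB.sqrt_eq_cfcSqrt]
  exact ((CFC.sqrt_eq_iff B A hB.nonneg hA.nonneg).mpr (by rw [← sq]; exact hAB)).symm

end sqrtPort

variable {d : ℕ}

lemma trace_re_CTmul (A : Matrix (Fin d) (Fin d) ℂ) :
    (Aᴴ * A).trace.re = ∑ p : (Fin d) × (Fin d), ‖A p.2 p.1‖ ^ 2 := by
  rw [Matrix.trace]
  simp only [Matrix.diag, Matrix.mul_apply, Matrix.conjTranspose_apply]
  rw [Complex.re_sum, Fintype.sum_prod_type]
  congr 1; ext i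
  rw [Complex.re_sum]
  congr 1; ext j
  rw [mul_comm, Complex.star_def, Complex.mul_conj]
  simp [Complex.sq_norm]

lemma trace_re_CTmul_nonneg (A : Matrix (Fin d) (Fin d) ℂ) : 0 ≤ (Aᴴ * A).trace.re := by
  rw [trace_re_CTmul]; positivity

lemma psd_trace_re_nonneg {P : Matrix (Fin d) (Fin d) ℂ} (hP : P.PosSemidef) :
    0 ≤ P.trace.re := by
  have h := trace_re_CTmul_nonneg hP.sqrt
  rwa [hP.posSemidef_sqrt.1.eq, hP.sqrt_mul_self] at h

/-- Cauchy-Schwarz for the trace inner product. -/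
lemma trace_re_CS (A B : Matrix (Fin d) (Fin d) ℂ) :
    (Aᴴ * B).trace.re ≤ Real.sqrt (Aᴴ * A).trace.re * Real.sqrt (Bᴴ * B).trace.re := by
  have h1 : (Aᴴ * B).trace.re ≤ ∑ p : (Fin d) × (Fin d),
      ‖A p.2 p.1‖ * ‖B p.2 p.1‖ := by
    calc (Aᴴ * B).trace.re ≤ ‖(Aᴴ * B).trace‖ := Complex.re_le_norm _
    _ ≤ ∑ p : (Fin d) × (Fin d), ‖A p.2 p.1‖ * ‖B p.2 p.1‖ := by
        rw [Matrix.trace]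
        simp only [Matrix.diag, Matrix.mul_apply, Matrix.conjTranspose_apply]
        rw [Fintype.sum_prod_type]
        refine le_trans (norm_sum_le _ _) (Finset.sum_le_sum fun i _ => ?_)
        refine le_trans (norm_sum_le _ _) (Finset.sum_le_sum fun j _ => ?_)
        rw [norm_mul, Complex.star_def, Complex.norm_conj]
  have h2 := Finset.sum_mul_sq_le_sq_mul_sq Finset.univ
      (fun p : (Fin d) × (Fin d) => ‖A p.2 p.1‖)
      (fun p : (Fin d) × (Fin d) => ‖B p.2 p.1‖)
  have h3 : ∑ p : (Fin d) × (Fin d), ‖A p.2 p.1‖ * ‖B p.2 p.1‖ ≤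
      Real.sqrt (Aᴴ * A).trace.re * Real.sqrt (Bᴴ * B).trace.re := by
    rw [← Real.sqrt_mul (trace_re_CTmul_nonneg A), trace_re_CTmul, trace_re_CTmul]
    calc (∑ p : (Fin d) × (Fin d), ‖A p.2 p.1‖ * ‖B p.2 p.1‖)
        = Real.sqrt ((∑ p : (Fin d) × (Fin d),
            ‖A p.2 p.1‖ * ‖B p.2 p.1‖) ^ 2) := by
          rw [Real.sqrt_sq (by positivity)]
    _ ≤ _ := Real.sqrt_le_sqrt h2
  exact h1.trans h3


lemma sign_sq_le_one (x : ℝ) : Real.sign x ^ 2 ≤ 1 := by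
  rcases Real.sign_apply_eq x with h | h | h <;> rw [h] <;> norm_num

lemma my_sign_mul_self (x : ℝ) : Real.sign x * x = |x| := by
  rcases lt_trichotomy x 0 with h | h | h
  · rw [Real.sign_of_neg h, abs_of_neg h]; ring
  · simp [h]
  · rw [Real.sign_of_pos h, abs_of_pos h]; ring


section spectralHelpers

variable {A : Matrix (Fin d) (Fin d) ℂ} (hA : A.IsHermitian)

lemma myUU : (star (hA.eigenvectorUnitary : Matrix (Fin d) (Fin d) ℂ)) *
    (hA.eigenvectorUnitary : Matrix (Fin d) (Fin d) ℂ) = 1 :=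
  Matrix.mem_unitaryGroup_iff'.mp hA.eigenvectorUnitary.2

lemma myUU' : (hA.eigenvectorUnitary : Matrix (Fin d) (Fin d) ℂ) *
    (star (hA.eigenvectorUnitary : Matrix (Fin d) (Fin d) ℂ)) = 1 :=
  Matrix.mem_unitaryGroup_iff.mp hA.eigenvectorUnitary.2

lemma conj_mul_conj (v w : Fin d → ℂ) :
    ((hA.eigenvectorUnitary : Matrix (Fin d) (Fin d) ℂ) * diagonal v *
      (star (hA.eigenvectorUnitary : Matrix (Fin d) (Fin d) ℂ))) *
    ((hA.eigenvectorUnitary : Matrix (Fin d) (Fin d) ℂ) * diagonal w *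
      (star (hA.eigenvectorUnitary : Matrix (Fin d) (Fin d) ℂ))) =
    (hA.eigenvectorUnitary : Matrix (Fin d) (Fin d) ℂ) * diagonal (v * w) *
      (star (hA.eigenvectorUnitary : Matrix (Fin d) (Fin d) ℂ)) := by
  set U := (hA.eigenvectorUnitary : Matrix (Fin d) (Fin d) ℂ)
  calc (U * diagonal v * star U) * (U * diagonal w * star U)
      = U * diagonal v * ((star U * U) * (diagonal w * star U)) := by
        simp only [Matrix.mul_assoc]
    _ = U * (diagonal v * diagonal w) * star U := by
        rw [myUU hA, one_mul]; simp only [Matrix.mul_assoc]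
    _ = _ := by rw [diagonal_mul_diagonal]; rfl

lemma conj_trace (v : Fin d → ℂ) :
    ((hA.eigenvectorUnitary : Matrix (Fin d) (Fin d) ℂ) * diagonal v *
      (star (hA.eigenvectorUnitary : Matrix (Fin d) (Fin d) ℂ))).trace = ∑ i, v i := by
  rw [Matrix.trace_mul_comm, ← Matrix.mul_assoc, myUU hA, one_mul, trace_diagonal]

lemma conj_herm (v : Fin d → ℝ) :
    ((hA.eigenvectorUnitary : Matrix (Fin d) (Fin d) ℂ) * diagonal (fun i => (v i : ℂ)) *
      (star (hA.eigenvectorUnitary : Matrix (Fin d) (Fin d) ℂ))).IsHermitian := by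
  set U := (hA.eigenvectorUnitary : Matrix (Fin d) (Fin d) ℂ)
  have hstar : (star fun i => (v i : ℂ)) = fun i => (v i : ℂ) := by
    funext i; simp [Complex.star_def, Complex.conj_ofReal]
  rw [Matrix.IsHermitian, Matrix.star_eq_conjTranspose, conjTranspose_mul, conjTranspose_mul,
    conjTranspose_conjTranspose, diagonal_conjTranspose, hstar, Matrix.mul_assoc]

lemma conj_psd (v : Fin d → ℝ) (h : ∀ i, 0 ≤ v i) :
    ((hA.eigenvectorUnitary : Matrix (Fin d) (Fin d) ℂ) * diagonal (fun i => (v i : ℂ)) *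
      (star (hA.eigenvectorUnitary : Matrix (Fin d) (Fin d) ℂ))).PosSemidef := by
  set U := (hA.eigenvectorUnitary : Matrix (Fin d) (Fin d) ℂ)
  have hd : (diagonal (fun i => (v i : ℂ))).PosSemidef := by
    refine posSemidef_diagonal_iff.mpr fun i => ?_
    exact_mod_cast Complex.zero_le_real.mpr (h i)
  have := hd.mul_mul_conjTranspose_same U
  rwa [show Uᴴ = star U from rfl] at this

lemma my_spectral : A = (hA.eigenvectorUnitary : Matrix (Fin d) (Fin d) ℂ) *
    diagonal (fun i => (hA.eigenvalues i : ℂ)) *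
    (star (hA.eigenvectorUnitary : Matrix (Fin d) (Fin d) ℂ)) := by
  have h := hA.spectral_theorem; rw [Unitary.conjStarAlgAut_apply] at h; exact h

lemma one_eq_conj : (1 : Matrix (Fin d) (Fin d) ℂ) =
    (hA.eigenvectorUnitary : Matrix (Fin d) (Fin d) ℂ) * diagonal (fun _ => (1:ℂ)) *
    (star (hA.eigenvectorUnitary : Matrix (Fin d) (Fin d) ℂ)) := by
  rw [show (diagonal (fun _ => (1:ℂ)) : Matrix (Fin d) (Fin d) ℂ) = 1 from diagonal_one,
    mul_one, myUU' hA]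

end spectralHelpers

lemma herm_sign_matrix {A : Matrix (Fin d) (Fin d) ℂ} (hA : A.IsHermitian) :
    ∃ S : Matrix (Fin d) (Fin d) ℂ, S.IsHermitian ∧ (1 - S * S).PosSemidef ∧
      traceNorm A = (S * A).trace.re := by
  set U := (hA.eigenvectorUnitary : Matrix (Fin d) (Fin d) ℂ) with hU
  set lam := hA.eigenvalues with hlam
  refine ⟨U * diagonal (fun i => ((Real.sign (lam i) : ℝ) : ℂ)) * star U,
    conj_herm hA _, ?_, ?_⟩
  · have h1 : 1 - (U * diagonal (fun i => ((Real.sign (lam i) : ℝ) : ℂ)) * star U) *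
        (U * diagonal (fun i => ((Real.sign (lam i) : ℝ) : ℂ)) * star U)
        = U * diagonal (fun i => ((1 - Real.sign (lam i) ^ 2 : ℝ) : ℂ)) * star U := by
      rw [conj_mul_conj hA, one_eq_conj hA, ← sub_mul, ← mul_sub, diagonal_sub]
      congr 2
      funext i
      push_cast
      simp [Pi.mul_apply]
      ring
    rw [h1]
    exact conj_psd hA _ fun i => by have := sign_sq_le_one (lam i); linarith
  · have hBpsd := conj_psd hA (fun i => |lam i|) fun i => abs_nonneg _
    have hB2 : (U * diagonal (fun i => ((|lam i| : ℝ) : ℂ)) * star U) ^ 2 = Aᴴ * A := by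
      rw [pow_two, conj_mul_conj hA, hA.eq]
      conv_rhs => rw [my_spectral hA, conj_mul_conj hA]
      have hd : ((fun i => ((|lam i| : ℝ) : ℂ)) * (fun i => ((|lam i| : ℝ) : ℂ)) : Fin d → ℂ)
          = (fun i => ((lam i : ℝ) : ℂ)) * (fun i => ((lam i : ℝ) : ℂ)) := by
        funext i
        show ((|lam i| : ℝ) : ℂ) * ((|lam i| : ℝ) : ℂ) = ((lam i : ℝ) : ℂ) * ((lam i : ℝ) : ℂ)
        rw [← Complex.ofReal_mul, ← Complex.ofReal_mul, abs_mul_abs_self]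
      rw [hd]
    have hsqrt := hBpsd.eq_sqrt_of_sq_eq (Matrix.posSemidef_conjTranspose_mul_self A) hB2
    have hSA : (U * diagonal (fun i => ((Real.sign (lam i) : ℝ) : ℂ)) * star U) * A
        = U * diagonal ((fun i => ((Real.sign (lam i) : ℝ) : ℂ)) *
            (fun i => ((lam i : ℝ) : ℂ))) * star U := by
      conv_lhs => rw [my_spectral hA]
      rw [conj_mul_conj hA]
    rw [traceNorm, ← hsqrt, conj_trace hA, hSA, conj_trace hA, Complex.re_sum, Complex.re_sum]
    congr 1
    funext i
    simp only [Pi.mul_apply, ← Complex.ofReal_mul, Complex.ofReal_re]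
    rw [my_sign_mul_self]


lemma eig_le_one {X : Matrix (Fin d) (Fin d) ℂ} (hX : X.PosSemidef)
    (hX1 : (1 - X).PosSemidef) (i : Fin d) : hX.1.eigenvalues i ≤ 1 := by
  set v := hX.1.eigenvectorBasis i with hv
  have hnorm : (star ⇑v) ⬝ᵥ ⇑v = 1 := by
    have h := hX.1.eigenvectorBasis.orthonormal.1 i
    rw [dotProduct_comm, ← EuclideanSpace.inner_eq_star_dotProduct]
    rw [@inner_self_eq_norm_sq_to_K ℂ, ← hv] at *
    rw [← hv] at h
    norm_cast
    rw [h]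
    norm_num
  have hmv : X *ᵥ ⇑v = (hX.1.eigenvalues i : ℂ) • ⇑v := by
    have := hX.1.mulVec_eigenvectorBasis i
    rw [this]
    funext j
    simp [hv, RCLike.real_smul_eq_coe_smul (K := ℂ)]
  have h2 := hX1.dotProduct_mulVec_nonneg ⇑v
  rw [Matrix.sub_mulVec, Matrix.one_mulVec, dotProduct_sub, hmv, dotProduct_smul, hnorm,
    smul_eq_mul, mul_one] at h2
  have h3 : (0:ℝ) ≤ 1 - hX.1.eigenvalues i := by
    have := Complex.le_def.mp h2
    simpa using this.1
  linarith

section sqrtX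
variable {X : Matrix (Fin d) (Fin d) ℂ} (hX : X.PosSemidef)

lemma sqrt_eq_conj : hX.sqrt = (hX.1.eigenvectorUnitary : Matrix (Fin d) (Fin d) ℂ) *
    diagonal (fun i => ((Real.sqrt (hX.1.eigenvalues i) : ℝ) : ℂ)) *
    (star (hX.1.eigenvectorUnitary : Matrix (Fin d) (Fin d) ℂ)) := rfl

lemma one_sub_sqrt_eq_conj : 1 - hX.sqrt =
    (hX.1.eigenvectorUnitary : Matrix (Fin d) (Fin d) ℂ) *
    diagonal (fun i => ((1 - Real.sqrt (hX.1.eigenvalues i) : ℝ) : ℂ)) *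
    (star (hX.1.eigenvectorUnitary : Matrix (Fin d) (Fin d) ℂ)) := by
  rw [sqrt_eq_conj hX]
  conv_lhs => rw [one_eq_conj hX.1]
  rw [← sub_mul, ← mul_sub, diagonal_sub]
  congr 2
  funext i
  push_cast
  ring

lemma one_sub_sqrt_psd (hX1 : (1 - X).PosSemidef) : (1 - hX.sqrt).PosSemidef := by
  rw [one_sub_sqrt_eq_conj hX]
  refine conj_psd hX.1 _ fun i => ?_
  have h1 := eig_le_one hX hX1 i
  have h2 : Real.sqrt (hX.1.eigenvalues i) ≤ 1 := Real.sqrt_le_one.mpr h1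
  linarith

/-- `(1 - X) - (1 - √X)² ⪰ 0`. -/
lemma key_diff_psd (hX1 : (1 - X).PosSemidef) :
    ((1 - X) - (1 - hX.sqrt) * (1 - hX.sqrt)).PosSemidef := by
  have h1X : 1 - X = (hX.1.eigenvectorUnitary : Matrix (Fin d) (Fin d) ℂ) *
      diagonal (fun i => ((1 - hX.1.eigenvalues i : ℝ) : ℂ)) *
      (star (hX.1.eigenvectorUnitary : Matrix (Fin d) (Fin d) ℂ)) := by
    have hd : (diagonal (fun i => ((1 - hX.1.eigenvalues i : ℝ) : ℂ)) : Matrix (Fin d) (Fin d) ℂ)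
        = diagonal (fun _ => (1:ℂ)) - diagonal (fun i => ((hX.1.eigenvalues i : ℝ) : ℂ)) := by
      rw [diagonal_sub]
      congr 1
      funext i
      push_cast
      ring
    rw [hd, mul_sub, sub_mul, ← one_eq_conj hX.1, ← my_spectral hX.1]
  rw [h1X, one_sub_sqrt_eq_conj hX, conj_mul_conj hX.1, ← sub_mul, ← mul_sub, diagonal_sub]
  have key : ∀ i : Fin d, (0:ℝ) ≤
      (1 - hX.1.eigenvalues i) - (1 - Real.sqrt (hX.1.eigenvalues i))^2 := by
    intro i
    have h0 := hX.eigenvalues_nonneg i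
    have h1 := eig_le_one hX hX1 i
    have hs : Real.sqrt (hX.1.eigenvalues i) ^ 2 = hX.1.eigenvalues i := Real.sq_sqrt h0
    have h2 : Real.sqrt (hX.1.eigenvalues i) ≤ 1 := Real.sqrt_le_one.mpr h1
    have h3 : 0 ≤ Real.sqrt (hX.1.eigenvalues i) := Real.sqrt_nonneg _
    nlinarith
  simp only [Pi.mul_apply]
  have hfun : (fun i => ((1 - hX.1.eigenvalues i : ℝ) : ℂ) -
      ((1 - Real.sqrt (hX.1.eigenvalues i) : ℝ) : ℂ) *
      ((1 - Real.sqrt (hX.1.eigenvalues i) : ℝ) : ℂ))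
      = fun i => (((1 - hX.1.eigenvalues i) - (1 - Real.sqrt (hX.1.eigenvalues i))^2 : ℝ) : ℂ) := by
    funext i
    push_cast
    ring
  rw [hfun]
  exact conj_psd hX.1 _ key

end sqrtX

lemma trace_conj_mono {P Q : Matrix (Fin d) (Fin d) ℂ} (C : Matrix (Fin d) (Fin d) ℂ)
    (h : (Q - P).PosSemidef) : (C * P * Cᴴ).trace.re ≤ (C * Q * Cᴴ).trace.re := by
  have h1 := psd_trace_re_nonneg (h.mul_mul_conjTranspose_same C)
  have h2 : C * (Q - P) * Cᴴ = C * Q * Cᴴ - C * P * Cᴴ := by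
    rw [Matrix.mul_sub, Matrix.sub_mul]
  rw [h2, Matrix.trace_sub, Complex.sub_re] at h1
  linarith

/-- Gentle Measurement lemma: for positive semidefinite `ρ`, `X` with `0 ≤ X ≤ I`,
`‖ρ − √X ρ √X‖₁ ≤ 2 √(Tr ρ) √(Tr(ρ(I − X)))`. -/
theorem gentle_measurement (d : ℕ) (ρ X : Matrix (Fin d) (Fin d) ℂ)
    (hρ : ρ.PosSemidef) (hX : X.PosSemidef) (hX1 : (1 - X).PosSemidef) :
    traceNorm (ρ - hX.sqrt * ρ * hX.sqrt) ≤
      2 * Real.sqrt ρ.trace.re * Real.sqrt ((ρ * (1 - X)).trace.re) := by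
  set M := hX.sqrt with hMdef
  have hM : M.PosSemidef := hX.posSemidef_sqrt
  have hMh : Mᴴ = M := hM.1
  have hMM : M * M = X := hX.sqrt_mul_self
  set R := hρ.sqrt with hRdef
  have hR : R.PosSemidef := hρ.posSemidef_sqrt
  have hRh : Rᴴ = R := hR.1
  have hRR : R * R = ρ := hρ.sqrt_mul_self
  set W := (1 : Matrix (Fin d) (Fin d) ℂ) - M with hWdef
  have hWpsd : W.PosSemidef := one_sub_sqrt_psd hX hX1
  have hWh : Wᴴ = W := hWpsd.1
  have hWW : ((1 - X) - W * W).PosSemidef := key_diff_psd hX hX1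
  -- Hermiticity of the difference
  have hMρM : (M * ρ * M).IsHermitian := by
    have h3 := (hρ.mul_mul_conjTranspose_same M).1
    rwa [hMh] at h3
  have hD : (ρ - M * ρ * M).IsHermitian := hρ.1.sub hMρM
  obtain ⟨S, hSh, hS2, htn⟩ := herm_sign_matrix hD
  rw [htn]
  -- decomposition
  have e1 : (R * W * S)ᴴ = S * (W * R) := by
    simp only [conjTranspose_mul, hSh.eq, hWh, hRh, Matrix.mul_assoc]
  have e2 : (R * M * S)ᴴ = S * (M * R) := by
    simp only [conjTranspose_mul, hSh.eq, hMh, hRh, Matrix.mul_assoc]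
  have hdecomp : S * (ρ - M * ρ * M) = (R * W * S)ᴴ * R + (R * M * S)ᴴ * (R * W) := by
    rw [e1, e2, ← hRR, hWdef]
    noncomm_ring
  rw [hdecomp, Matrix.trace_add, Complex.add_re]
  -- the recurring bound Tr(R W² Rᴴ) ≤ Tr(ρ(1-X))
  have hkey : (R * (W * W) * Rᴴ).trace.re ≤ ((ρ * (1 - X)).trace.re) := by
    calc (R * (W * W) * Rᴴ).trace.re ≤ (R * (1 - X) * Rᴴ).trace.re :=
          trace_conj_mono R hWW
    _ = ((ρ * (1 - X)).trace).re := by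
        rw [hRh, Matrix.trace_mul_comm, ← Matrix.mul_assoc, hRR]
  -- term 1
  have t1 : ((R * W * S)ᴴ * R).trace.re ≤
      Real.sqrt ((ρ * (1 - X)).trace.re) * Real.sqrt (ρ.trace.re) := by
    refine le_trans (trace_re_CS (R * W * S) R) ?_
    have hb1 : ((R * W * S)ᴴ * (R * W * S)).trace.re ≤ ((ρ * (1 - X)).trace.re) := by
      have hc : (R * W * S) * (R * W * S)ᴴ = (R * W) * (S * S) * (R * W)ᴴ := by
        rw [e1, conjTranspose_mul, hWh, hRh]
        simp only [Matrix.mul_assoc]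
      calc ((R * W * S)ᴴ * (R * W * S)).trace.re
          = ((R * W) * (S * S) * (R * W)ᴴ).trace.re := by
            rw [Matrix.trace_mul_comm, hc]
        _ ≤ ((R * W) * 1 * (R * W)ᴴ).trace.re := trace_conj_mono (R * W) hS2
        _ = (R * (W * W) * Rᴴ).trace.re := by
            rw [Matrix.mul_one, conjTranspose_mul, hWh, hRh]
            congr 1
            rw [Matrix.trace_mul_comm]
            rw [show R * (W * W) * R = (R * W) * (W * R) by simp only [Matrix.mul_assoc]]
            rw [Matrix.trace_mul_comm]
        _ ≤ ((ρ * (1 - X)).trace.re) := hkey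
    have hb2 : (Rᴴ * R).trace.re = ρ.trace.re := by rw [hRh, hRR]
    rw [hb2]
    exact mul_le_mul_of_nonneg_right (Real.sqrt_le_sqrt hb1) (Real.sqrt_nonneg _)
  -- term 2
  have t2 : ((R * M * S)ᴴ * (R * W)).trace.re ≤
      Real.sqrt (ρ.trace.re) * Real.sqrt ((ρ * (1 - X)).trace.re) := by
    refine le_trans (trace_re_CS (R * M * S) (R * W)) ?_
    have hb1 : ((R * M * S)ᴴ * (R * M * S)).trace.re ≤ ρ.trace.re := by
      have hc : (R * M * S) * (R * M * S)ᴴ = (R * M) * (S * S) * (R * M)ᴴ := by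
        rw [e2, conjTranspose_mul, hMh, hRh]
        simp only [Matrix.mul_assoc]
      calc ((R * M * S)ᴴ * (R * M * S)).trace.re
          = ((R * M) * (S * S) * (R * M)ᴴ).trace.re := by
            rw [Matrix.trace_mul_comm, hc]
        _ ≤ ((R * M) * 1 * (R * M)ᴴ).trace.re := trace_conj_mono (R * M) hS2
        _ = (R * X * Rᴴ).trace.re := by
            rw [Matrix.mul_one, conjTranspose_mul, hMh, hRh]
            rw [show R * M * (M * R) = R * (M * M) * R by simp only [Matrix.mul_assoc], hMM]
        _ ≤ (R * 1 * Rᴴ).trace.re := by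
            refine trace_conj_mono R ?_
            simpa using hX1
        _ = ρ.trace.re := by rw [Matrix.mul_one, hRh, hRR]
    have hb2 : ((R * W)ᴴ * (R * W)).trace.re ≤ ((ρ * (1 - X)).trace.re) := by
      refine le_trans (le_of_eq ?_) hkey
      rw [conjTranspose_mul, hWh, hRh, Matrix.trace_mul_comm,
        show (R * W) * (W * R) = R * (W * W) * Rᴴ by rw [hRh]; simp only [Matrix.mul_assoc],
        hRh]
    calc Real.sqrt (((R * M * S)ᴴ * (R * M * S)).trace.re) *
          Real.sqrt (((R * W)ᴴ * (R * W)).trace.re)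
        ≤ Real.sqrt (ρ.trace.re) * Real.sqrt (((R * W)ᴴ * (R * W)).trace.re) :=
          mul_le_mul_of_nonneg_right (Real.sqrt_le_sqrt hb1) (Real.sqrt_nonneg _)
      _ ≤ _ := mul_le_mul_of_nonneg_left (Real.sqrt_le_sqrt hb2) (Real.sqrt_nonneg _)
  calc ((R * W * S)ᴴ * R).trace.re + ((R * M * S)ᴴ * (R * W)).trace.re
      ≤ Real.sqrt ((ρ * (1 - X)).trace.re) * Real.sqrt (ρ.trace.re) +
        Real.sqrt (ρ.trace.re) * Real.sqrt ((ρ * (1 - X)).trace.re) := add_le_add t1 t2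
    _ = 2 * Real.sqrt ρ.trace.re * Real.sqrt ((ρ * (1 - X)).trace.re) := by ring
end

section
/- Let d, n ≥ 1 and let Π^{sym}_n be the orthogonal projector onto the symmetric subspace of (ℂ^d)^{⊗n} (the subspace of vectors invariant under all permutations of the n tensor factors). Then Π^{sym}_n = c_{n,d} · ∫ |θ⟩⟨θ|^{⊗n} dθ, where c_{n,d} = binomial(n + d − 1, n) and the integral is over unit vectors θ ∈ ℂ^d with respect to the Haar (unitarily invariant) probability measure on the unit sphere of ℂ^d. -/
open Matrix MeasureTheory Finset
open scoped BigOperators ComplexConjugate ComplexOrder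

noncomputable section

namespace DeFinetti

/-- The `n`-fold tensor power `ψ^{⊗n}` of a vector `ψ ∈ ℂ^d`, as a vector in `(ℂ^d)^{⊗n}`
(indexed by functions `Fin n → Fin d`). -/
def tpow {d : ℕ} (ψ : Fin d → ℂ) (n : ℕ) : (Fin n → Fin d) → ℂ :=
  fun x => ∏ i, ψ (x i)

/-- The rank-one operator `|θ⟩⟨θ|^{⊗n}` on `(ℂ^d)^{⊗n}`, as a matrix. -/
def tpowProj {d : ℕ} (θ : Fin d → ℂ) (n : ℕ) : Matrix (Fin n → Fin d) (Fin n → Fin d) ℂ :=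
  Matrix.of fun x y => tpow θ n x * conj (tpow θ n y)

/-- `ψ ∈ ℂ^d` is a unit vector. -/
def IsUnitVec {d : ℕ} (ψ : Fin d → ℂ) : Prop := ∑ i, Complex.normSq (ψ i) = 1

/-- `μ` is the Haar (unitarily invariant) probability measure on the unit sphere of `ℂ^d`,
viewed as a measure on `ℂ^d` concentrated on the sphere. -/
def IsHaarOnSphere {d : ℕ} (μ : Measure (Fin d → ℂ)) : Prop :=
  IsProbabilityMeasure μ ∧
  μ {ψ : Fin d → ℂ | IsUnitVec ψ} = 1 ∧
  ∀ U ∈ Matrix.unitaryGroup (Fin d) ℂ, μ.map (fun ψ => Matrix.mulVec U ψ) = μ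

/-- Entrywise (Bochner) integral of a matrix-valued function against a measure on `ℂ^d`. -/
def matIntegral {d : ℕ} {ι : Type*} (μ : Measure (Fin d → ℂ))
    (f : (Fin d → ℂ) → Matrix ι ι ℂ) : Matrix ι ι ℂ :=
  Matrix.of fun x y => ∫ ψ, f ψ x y ∂μ

/-- Invariance of an operator on `(ℂ^d)^{⊗m}` under every permutation of the `m` tensor
factors. -/
def PermInvariant {d m : ℕ} (ρ : Matrix (Fin m → Fin d) (Fin m → Fin d) ℂ) : Prop :=
  ∀ σ : Equiv.Perm (Fin m), ∀ x y, ρ (x ∘ σ) (y ∘ σ) = ρ x y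

/-- A density matrix: positive semidefinite with unit trace. -/
def IsDensityMatrix {ι : Type*} [Fintype ι] (ρ : Matrix ι ι ℂ) : Prop :=
  ρ.PosSemidef ∧ ρ.trace = 1

/-- The partial trace over the last `k` of `n + k` tensor factors. -/
def ptrace {d : ℕ} (n k : ℕ) (ρ : Matrix (Fin (n+k) → Fin d) (Fin (n+k) → Fin d) ℂ) :
    Matrix (Fin n → Fin d) (Fin n → Fin d) ℂ :=
  Matrix.of fun x y => ∑ z : Fin k → Fin d, ρ (Fin.append x z) (Fin.append y z)

/-- The compression `(I ⊗ ⟨ψ|^{⊗k}) ρ (I ⊗ |ψ⟩^{⊗k})` of an operator `ρ` on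
`(ℂ^d)^{⊗(n+k)}`, an operator on `(ℂ^d)^{⊗n}`. -/
def compress {d : ℕ} (n k : ℕ) (ρ : Matrix (Fin (n+k) → Fin d) (Fin (n+k) → Fin d) ℂ)
    (ψ : Fin d → ℂ) : Matrix (Fin n → Fin d) (Fin n → Fin d) ℂ :=
  Matrix.of fun x y => ∑ z : Fin k → Fin d, ∑ w : Fin k → Fin d,
    conj (tpow ψ k z) * ρ (Fin.append x z) (Fin.append y w) * tpow ψ k w

/-- The squared overlap `x_{θψ} = |⟨θ|ψ⟩|²` of two vectors in `ℂ^d`. -/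
def overlap {d : ℕ} (θ ψ : Fin d → ℂ) : ℝ := Complex.normSq (∑ i, conj (θ i) * ψ i)

/-- The projector `P_{ψ,S}` acting as `|ψ⟩⟨ψ|` on the tensor factors outside `S` and as
`I - |ψ⟩⟨ψ|` on the tensor factors in `S`. -/
def projOfSet {d : ℕ} (ψ : Fin d → ℂ) (n : ℕ) (S : Finset (Fin n)) :
    Matrix (Fin n → Fin d) (Fin n → Fin d) ℂ :=
  Matrix.of fun x y => ∏ i, if i ∈ S
    then (if x i = y i then (1:ℂ) else 0) - ψ (x i) * conj (ψ (y i))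
    else ψ (x i) * conj (ψ (y i))

/-- The projector `P_ψ^{≥ r} = Σ_{|S| ≥ r} P_{ψ,S}`. -/
def projGE {d : ℕ} (ψ : Fin d → ℂ) (n r : ℕ) : Matrix (Fin n → Fin d) (Fin n → Fin d) ℂ :=
  ∑ S ∈ Finset.univ.filter (fun S : Finset (Fin n) => r ≤ S.card), projOfSet ψ n S

/-- The projector `P_ψ^{< r} = Σ_{|S| ≤ r - 1} P_{ψ,S}`. -/
def projLT {d : ℕ} (ψ : Fin d → ℂ) (n r : ℕ) : Matrix (Fin n → Fin d) (Fin n → Fin d) ℂ :=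
  ∑ S ∈ Finset.univ.filter (fun S : Finset (Fin n) => S.card < r), projOfSet ψ n S

/-- The trace norm `‖A‖₁ = Tr √(AᴴA)` of a matrix. -/
def traceNorm {ι : Type*} [Fintype ι] [DecidableEq ι] (A : Matrix ι ι ℂ) : ℝ :=
  (((Matrix.posSemidef_conjTranspose_mul_self A).1.eigenvectorUnitary : Matrix ι ι ℂ) *
    Matrix.diagonal (((↑) : ℝ → ℂ) ∘ (Real.sqrt ·) ∘ (Matrix.posSemidef_conjTranspose_mul_self A).1.eigenvalues) *
    (star ((Matrix.posSemidef_conjTranspose_mul_self A).1.eigenvectorUnitary : Matrix ι ι ℂ))).trace.re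

/-- `P` acts only on the tensor factors in `S` (i.e. acts as the identity outside `S`):
entries vanish unless the row and column indices agree outside `S`, and entries do not
depend on the common value of the indices outside `S`. -/
def ActsOn {d n : ℕ} (S : Finset (Fin n)) (P : Matrix (Fin n → Fin d) (Fin n → Fin d) ℂ) :
    Prop :=
  (∀ x y : Fin n → Fin d, (∃ i ∉ S, x i ≠ y i) → P x y = 0) ∧
  (∀ x y z w : Fin n → Fin d,
    P (S.piecewise x z) (S.piecewise y z) = P (S.piecewise x w) (S.piecewise y w))

/-- An `r`-local unitary on `(ℂ^d)^{⊗n}`: a unitary acting as the identity on at least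
`n - r` tensor factors. -/
def IsLocalUnitary {d : ℕ} (n r : ℕ) (P : Matrix (Fin n → Fin d) (Fin n → Fin d) ℂ) :
    Prop :=
  P ∈ Matrix.unitaryGroup (Fin n → Fin d) ℂ ∧
  ∃ S : Finset (Fin n), S.card ≤ r ∧ ActsOn S P

/-- The quantum Hamming ball `Δ_r(φ)`: the span of all vectors `P φ` for `P` an `r`-local
unitary. -/
def hammingBall {d : ℕ} (n r : ℕ) (φ : (Fin n → Fin d) → ℂ) :
    Submodule ℂ ((Fin n → Fin d) → ℂ) :=
  Submodule.span ℂ {w | ∃ P, IsLocalUnitary n r P ∧ w = P.mulVec φ}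

/-- The quantum Hamming distance from `τ` to `φ` is at most `r`: the support (range) of `τ`
is contained in the quantum Hamming ball `Δ_r(φ)`. -/
def hammingDistLE {d n : ℕ} (τ : Matrix (Fin n → Fin d) (Fin n → Fin d) ℂ)
    (φ : (Fin n → Fin d) → ℂ) (r : ℕ) : Prop :=
  ∀ v, τ.mulVec v ∈ hammingBall n r φ

section Aux
variable {n d : ℕ}

def cnt (x : Fin n → Fin d) (k : Fin d) : ℕ := (univ.filter fun i => x i = k).card

lemma prod_comp_cnt {M : Type*} [CommMonoid M] (x : Fin n → Fin d) (g : Fin d → M) :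
    ∏ i, g (x i) = ∏ k, g k ^ cnt x k := by
  rw [← Finset.prod_fiberwise univ x (fun i => g (x i))]
  refine Finset.prod_congr rfl fun k _ => ?_
  rw [Finset.prod_congr rfl (fun i hi => by rw [(Finset.mem_filter.1 hi).2] : ∀ i ∈ univ.filter fun i => x i = k, g (x i) = g k), Finset.prod_const]
  rfl

lemma sum_cnt (x : Fin n → Fin d) : ∑ k, cnt x k = n := by
  classical
  calc ∑ k, cnt x k = ∑ k, ∑ _i ∈ univ.filter fun i => x i = k, 1 :=
        Finset.sum_congr rfl fun k _ => Finset.card_eq_sum_ones _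
    _ = ∑ _i : Fin n, 1 := Finset.sum_fiberwise _ _ _
    _ = n := by simp

lemma cnt_comp_perm (x : Fin n → Fin d) (σ : Equiv.Perm (Fin n)) (k : Fin d) :
    cnt (x ∘ σ) k = cnt x k := by
  classical
  unfold cnt
  rw [← Fintype.card_subtype, ← Fintype.card_subtype]
  exact Fintype.card_congr (σ.subtypeEquiv fun i => Iff.rfl)

lemma exists_perm_of_cnt_eq {x y : Fin n → Fin d} (h : cnt x = cnt y) :
    ∃ σ : Equiv.Perm (Fin n), x = y ∘ σ := by
  classical
  have hcard : ∀ k, Fintype.card {i // x i = k} = Fintype.card {i // y i = k} := by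
    intro k
    rw [Fintype.card_subtype, Fintype.card_subtype]
    exact congrFun h k
  let e : ∀ k : Fin d, {i // x i = k} ≃ {i // y i = k} := fun k =>
    Fintype.equivOfCardEq (hcard k)
  refine ⟨(Equiv.sigmaFiberEquiv x).symm.trans ((Equiv.sigmaCongrRight e).trans
    (Equiv.sigmaFiberEquiv y)), ?_⟩
  funext i
  have h1 : (Equiv.sigmaFiberEquiv x).symm i = ⟨x i, ⟨i, rfl⟩⟩ := rfl
  simp only [Equiv.trans_apply, h1, Function.comp_apply]
  exact ((e (x i)) ⟨i, rfl⟩).2.symm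


def msOf (x : Fin n → Fin d) : Multiset (Fin d) := Multiset.map x Finset.univ.val

lemma cnt_eq_count (x : Fin n → Fin d) (k : Fin d) : cnt x k = (msOf x).count k := by
  classical
  rw [msOf, Multiset.count_map]
  show (Finset.filter (fun i => x i = k) Finset.univ).card = _
  rw [Finset.card_def, Finset.filter_val]
  congr 1
  exact Multiset.filter_congr fun i _ => eq_comm

lemma card_msOf (x : Fin n → Fin d) : Multiset.card (msOf x) = n := by
  simp [msOf]

def symOf (x : Fin n → Fin d) : Sym (Fin d) n := ⟨msOf x, card_msOf x⟩

lemma exists_fun_of_sym (s : Sym (Fin d) n) : ∃ x : Fin n → Fin d, msOf x = s.1 := by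
  obtain ⟨m, hm⟩ := s
  have hl : n = m.toList.length := by rw [Multiset.length_toList, hm]
  refine ⟨fun i => m.toList.get (Fin.cast hl i), ?_⟩
  show Multiset.map _ _ = m
  have h3 : (Finset.univ.val : Multiset (Fin m.toList.length))
      = (Finset.univ.val : Multiset (Fin n)).map (Fin.cast hl) := by
    have h4 := congrArg Finset.val (Finset.map_univ_equiv (finCongr hl))
    rw [Finset.map_val] at h4
    rw [← h4]
    exact (Multiset.map_congr rfl fun i _ => rfl)
  have h2 : (Finset.univ.val : Multiset (Fin n)).map (fun i => m.toList.get (Fin.cast hl i))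
      = (Finset.univ.val : Multiset (Fin m.toList.length)).map m.toList.get := by
    rw [h3, Multiset.map_map]
    rfl
  have h5 : (Finset.univ.val : Multiset (Fin m.toList.length))
      = ((List.finRange m.toList.length : List _) : Multiset _) := by rw [Fin.univ_def]
  rw [h2, h5, Multiset.map_coe, List.map_get_finRange, Multiset.coe_toList]

lemma card_image_cnt : (Finset.univ.image (cnt (n := n) (d := d))).card
    = (n + d - 1).choose n := by
  classical
  have hc : (cnt (n := n) (d := d)) = (fun s : Sym (Fin d) n => fun k => s.1.count k) ∘
      symOf := by
    funext x k; exact cnt_eq_count x k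
  have himg : (Finset.univ.image (symOf (n := n) (d := d))) = Finset.univ := by
    refine Finset.eq_univ_iff_forall.2 fun s => ?_
    obtain ⟨x, hx⟩ := exists_fun_of_sym s
    exact Finset.mem_image.2 ⟨x, Finset.mem_univ _, Subtype.ext hx⟩
  have hinj : Function.Injective (fun s : Sym (Fin d) n => fun k => s.1.count k) :=
    fun s t hst => Subtype.ext (Multiset.ext.2 fun a => congrFun hst a)
  rw [hc, ← Finset.image_image, himg, Finset.card_image_of_injective _ hinj,
    Finset.card_univ, Sym.card_sym_eq_choose, Fintype.card_fin, Nat.add_comm]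


end Aux


section Meas
variable {d : ℕ} {μ : Measure (Fin d → ℂ)}

lemma measSet_unit : MeasurableSet {ψ : Fin d → ℂ | IsUnitVec ψ} := by
  have hc : Continuous fun ψ : Fin d → ℂ => ∑ i, Complex.normSq (ψ i) := by
    exact continuous_finset_sum _ fun i _ =>
      Complex.continuous_normSq.comp (continuous_apply i)
  exact (isClosed_eq hc continuous_const).measurableSet

lemma ae_unit (hμ : IsHaarOnSphere μ) : ∀ᵐ θ ∂μ, IsUnitVec θ := by
  haveI := hμ.1
  have hcompl : μ {ψ : Fin d → ℂ | IsUnitVec ψ}ᶜ = 0 := by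
    rw [measure_compl measSet_unit (measure_ne_top μ _), hμ.2.1, measure_univ, tsub_self]
  exact MeasureTheory.mem_ae_iff.2 hcompl

lemma norm_le_one_of_unit {θ : Fin d → ℂ} (h : IsUnitVec θ) (k : Fin d) : ‖θ k‖ ≤ 1 := by
  have h1 : Complex.normSq (θ k) ≤ 1 := by
    rw [← h]
    exact Finset.single_le_sum (f := fun i => Complex.normSq (θ i))
      (fun i _ => Complex.normSq_nonneg _) (Finset.mem_univ k)
  have h2 : Complex.normSq (θ k) = ‖θ k‖ ^ 2 := by
    rw [Complex.normSq_eq_norm_sq]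
  nlinarith [norm_nonneg (θ k)]

lemma integrable_of_unit_bound {E : Type*} [NormedAddCommGroup E]
    (hμ : IsHaarOnSphere μ) {f : (Fin d → ℂ) → E} (hf : Continuous f) {C : ℝ}
    (hb : ∀ θ, IsUnitVec θ → ‖f θ‖ ≤ C) : Integrable f μ := by
  haveI := hμ.1
  exact ⟨hf.aestronglyMeasurable,
    MeasureTheory.HasFiniteIntegral.of_bounded ((ae_unit hμ).mono fun θ h => hb θ h)⟩

lemma continuous_mulVec (U : Matrix (Fin d) (Fin d) ℂ) :
    Continuous fun ψ : Fin d → ℂ => U.mulVec ψ := by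
  have := LinearMap.continuous_of_finiteDimensional (Matrix.mulVecLin U)
  exact this

lemma integral_unitary {E : Type*} [NormedAddCommGroup E] [NormedSpace ℝ E]
    (hμ : IsHaarOnSphere μ) {U : Matrix (Fin d) (Fin d) ℂ}
    (hU : U ∈ Matrix.unitaryGroup (Fin d) ℂ) {f : (Fin d → ℂ) → E} (hf : Continuous f) :
    ∫ θ, f θ ∂μ = ∫ θ, f (U.mulVec θ) ∂μ := by
  conv_lhs => rw [← hμ.2.2 U hU]
  refine MeasureTheory.integral_map (Continuous.aemeasurable (continuous_mulVec U)) ?_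
  rw [hμ.2.2 U hU]
  exact hf.aestronglyMeasurable

lemma exists_unitary_mulVec_eq (hd : 1 ≤ d) {φ : Fin d → ℂ} (hφ : IsUnitVec φ) :
    ∃ U ∈ Matrix.unitaryGroup (Fin d) ℂ,
      U.mulVec (fun j : Fin d => if j = (⟨0, hd⟩ : Fin d) then 1 else 0) = φ := by
  classical
  set i₀ : Fin d := ⟨0, hd⟩
  let E := EuclideanSpace ℂ (Fin d)
  let φ' : E := WithLp.toLp 2 φ
  have hnorm : ‖φ'‖ = 1 := by
    rw [EuclideanSpace.norm_eq]
    have : ∀ i, ‖φ i‖ ^ 2 = Complex.normSq (φ i) := fun i => by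
      rw [Complex.normSq_eq_norm_sq]
    change √(∑ i, ‖φ i‖ ^ 2) = 1
    rw [Finset.sum_congr rfl fun i _ => this i, hφ, Real.sqrt_one]
  have hON : Orthonormal ℂ (({i₀} : Set (Fin d)).restrict fun _ => φ') := by
    constructor
    · intro i; exact hnorm
    · intro i j hij
      exact absurd (Subtype.ext ((Set.eq_of_mem_singleton i.2).trans
        (Set.eq_of_mem_singleton j.2).symm)) hij
  have hcard : Module.finrank ℂ E = Fintype.card (Fin d) := by
    simp [E]
  obtain ⟨b, hb⟩ := hON.exists_orthonormalBasis_extension_of_card_eq hcard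
  have hbi₀ : b i₀ = φ' := hb i₀ rfl
  refine ⟨Matrix.of fun i j => b j i, ?_, ?_⟩
  · rw [Matrix.mem_unitaryGroup_iff']
    ext i j
    have := orthonormal_iff_ite.1 b.orthonormal i j
    simp only [Matrix.mul_apply, Matrix.star_apply, Matrix.one_apply, Matrix.of_apply,
      RCLike.star_def]
    calc ∑ k, (starRingEnd ℂ) (b i k) * b j k = (inner ℂ (b i) (b j) : ℂ) := by
          rw [PiLp.inner_apply]
          exact Finset.sum_congr rfl fun k _ => by rw [RCLike.inner_apply]; ring
      _ = if i = j then 1 else 0 := by rw [this]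
  · funext i
    simp only [Matrix.mulVec, dotProduct, Matrix.of_apply, mul_ite, mul_one, mul_zero]
    rw [Finset.sum_ite_eq' Finset.univ i₀ (fun j => b j i)]
    simp [hbi₀, φ']

end Meas


section Core
variable {d n : ℕ} {μ : Measure (Fin d → ℂ)}

lemma tpow_eq_prod_pow (θ : Fin d → ℂ) (x : Fin n → Fin d) :
    tpow θ n x = ∏ k, θ k ^ cnt x k := prod_comp_cnt x θ

lemma continuous_tpow (x : Fin n → Fin d) : Continuous fun θ : Fin d → ℂ => tpow θ n x :=
  continuous_finset_prod _ fun i _ => continuous_apply (x i)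

lemma continuous_entry (x y : Fin n → Fin d) :
    Continuous fun θ : Fin d → ℂ => tpow θ n x * conj (tpow θ n y) :=
  (continuous_tpow x).mul (Complex.continuous_conj.comp (continuous_tpow y))

lemma norm_tpow_le_one {θ : Fin d → ℂ} (h : IsUnitVec θ) (x : Fin n → Fin d) :
    ‖tpow θ n x‖ ≤ 1 := by
  rw [tpow, norm_prod]
  exact Finset.prod_le_one (fun i _ => norm_nonneg _)
    (fun i _ => norm_le_one_of_unit h (x i))

lemma norm_entry_le_one {θ : Fin d → ℂ} (h : IsUnitVec θ) (x y : Fin n → Fin d) :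
    ‖tpow θ n x * conj (tpow θ n y)‖ ≤ 1 := by
  rw [norm_mul, RCLike.norm_conj]
  exact mul_le_one₀ (norm_tpow_le_one h x) (norm_nonneg _) (norm_tpow_le_one h y)

lemma integrable_entry (hμ : IsHaarOnSphere μ) (x y : Fin n → Fin d) :
    Integrable (fun θ => tpow θ n x * conj (tpow θ n y)) μ :=
  integrable_of_unit_bound hμ (continuous_entry x y) (fun θ h => norm_entry_le_one h x y)

lemma cnt_le (x : Fin n → Fin d) (k : Fin d) : cnt x k ≤ n := by
  simpa [cnt] using Finset.card_filter_le Finset.univ (fun i => x i = k)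

lemma phase_vanish (hμ : IsHaarOnSphere μ) {x y : Fin n → Fin d} (hxy : cnt x ≠ cnt y) :
    (∫ θ, tpow θ n x * conj (tpow θ n y) ∂μ) = 0 := by
  classical
  obtain ⟨k₀, hk₀⟩ : ∃ k, cnt x k ≠ cnt y k := by
    by_contra hcon
    push_neg at hcon
    exact hxy (funext hcon)
  set a := cnt x k₀ with ha
  set b := cnt y k₀ with hb
  set α : ℝ := 2 * Real.pi / (2 * n + 1) with hα
  set ω : ℂ := Complex.exp (α * Complex.I) with hω
  have hconjω : conj ω = Complex.exp (-(α * Complex.I)) := by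
    rw [hω, ← Complex.exp_conj]
    congr 1
    simp [Complex.conj_I]
  have hωconj : ω * conj ω = 1 := by
    rw [hconjω, hω, ← Complex.exp_add, add_neg_cancel, Complex.exp_zero]
  set v : Fin d → ℂ := fun j => if j = k₀ then ω else 1 with hv
  have hUu : Matrix.diagonal v ∈ Matrix.unitaryGroup (Fin d) ℂ := by
    rw [Matrix.mem_unitaryGroup_iff, Matrix.star_eq_conjTranspose,
      Matrix.diagonal_conjTranspose, Matrix.diagonal_mul_diagonal]
    have h1 : (fun i => v i * star v i) = fun _ => (1:ℂ) := by
      funext j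
      by_cases hj : j = k₀ <;> simp [hv, hj, Pi.star_apply, RCLike.star_def, hωconj]
    show Matrix.diagonal (fun i => v i * star v i) = 1
    rw [h1]
    exact Matrix.diagonal_one
  set e : ℂ := ω ^ a * conj ω ^ b with he
  have key : ∀ θ : Fin d → ℂ,
      tpow ((Matrix.diagonal v).mulVec θ) n x *
        conj (tpow ((Matrix.diagonal v).mulVec θ) n y)
      = e * (tpow θ n x * conj (tpow θ n y)) := by
    intro θ
    have hfac : ∀ (z : Fin n → Fin d),
        tpow ((Matrix.diagonal v).mulVec θ) n z = ω ^ cnt z k₀ * tpow θ n z := by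
      intro z
      unfold tpow
      rw [Finset.prod_congr rfl (fun i _ => Matrix.mulVec_diagonal v θ (z i)),
        Finset.prod_mul_distrib]
      congr 1
      rw [prod_comp_cnt z v]
      have : ∀ k, v k ^ cnt z k = if k = k₀ then ω ^ cnt z k else 1 := by
        intro k
        by_cases h : k = k₀ <;> simp [hv, h]
      rw [Finset.prod_congr rfl fun k _ => this k, Finset.prod_ite_eq' Finset.univ k₀]
      simp
    rw [hfac x, hfac y, _root_.map_mul, _root_.map_pow]
    ring
  have hne : e ≠ 1 := by
    intro heq
    rw [he, hconjω, hω, ← Complex.exp_nat_mul, ← Complex.exp_nat_mul,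
      ← Complex.exp_add, Complex.exp_eq_one_iff] at heq
    obtain ⟨m, hm⟩ := heq
    have him := congrArg Complex.im hm
    simp only [Complex.add_im, Complex.mul_im, Complex.natCast_re, Complex.natCast_im,
      Complex.ofReal_re, Complex.ofReal_im, Complex.mul_re, Complex.I_re, Complex.I_im,
      Complex.neg_im, Complex.neg_re, Complex.intCast_re, Complex.intCast_im,
      Complex.re_ofNat, Complex.im_ofNat] at him
    ring_nf at him
    -- him should now be a real equation relating a, b, α, m, π
    have h2n1 : (0:ℝ) < 2 * (n:ℝ) + 1 := by positivity
    have hπ : Real.pi ≠ 0 := Real.pi_ne_zero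
    have hab : ((a:ℝ) - b) = m * (2 * (n:ℝ) + 1) := by
      field_simp at him
      have h2π : (2 * Real.pi) ≠ 0 := by positivity
      apply mul_right_cancel₀ h2π
      have hαm : α * (2 * (n:ℝ) + 1) = 2 * Real.pi := by
        rw [hα, div_mul_cancel₀ _ h2n1.ne']
      linear_combination (2 * (n:ℝ) + 1) * him - ((a:ℝ) - b) * hαm
    have han : (a:ℝ) ≤ n := by exact_mod_cast cnt_le x k₀
    have hbn : (b:ℝ) ≤ n := by exact_mod_cast cnt_le y k₀
    have ha0 : (0:ℝ) ≤ a := by positivity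
    have hb0 : (0:ℝ) ≤ b := by positivity
    by_cases hm0 : m = 0
    · rw [hm0] at hab
      simp at hab
      have : (a:ℝ) = b := by linarith [sub_eq_zero.1 (by linarith [hab] : (a:ℝ) - b = 0)]
      exact hk₀ (by exact_mod_cast this)
    · have h1le : (1:ℝ) ≤ |(m:ℝ)| := by
        have := Int.one_le_abs (by simpa using hm0)
        exact_mod_cast this
      have habs : |((a:ℝ) - b)| = |(m:ℝ)| * (2 * (n:ℝ) + 1) := by
        rw [hab, abs_mul, abs_of_pos h2n1]
      have hle : |((a:ℝ) - b)| ≤ n := abs_le.2 ⟨by linarith, by linarith⟩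
      nlinarith [habs, hle, h1le, h2n1]
  have hcov := integral_unitary hμ hUu (continuous_entry x y)
  have h2 : (∫ θ, tpow ((Matrix.diagonal v).mulVec θ) n x *
      conj (tpow ((Matrix.diagonal v).mulVec θ) n y) ∂μ)
      = e * ∫ θ, tpow θ n x * conj (tpow θ n y) ∂μ := by
    rw [MeasureTheory.integral_congr_ae (Filter.Eventually.of_forall key)]
    exact MeasureTheory.integral_const_mul e _
  have hI : (∫ θ, tpow θ n x * conj (tpow θ n y) ∂μ)
      = e * ∫ θ, tpow θ n x * conj (tpow θ n y) ∂μ := hcov.trans h2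
  have h3 : (e - 1) * ∫ θ, tpow θ n x * conj (tpow θ n y) ∂μ = 0 := by
    rw [sub_mul, one_mul, ← hI, sub_self]
  rcases mul_eq_zero.1 h3 with h | h
  · exact absurd (by linear_combination h : e = 1) hne
  · exact h

end Core


section Core2
variable {d n : ℕ} {μ : Measure (Fin d → ℂ)}

lemma entry_eq_mtil (x y : Fin n → Fin d) (h : cnt x = cnt y) :
    (∫ θ, tpow θ n x * conj (tpow θ n y) ∂μ)
    = ((∫ θ, ∏ k, Complex.normSq (θ k) ^ cnt x k ∂μ : ℝ) : ℂ) := by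
  rw [show ((∫ θ, ∏ k, Complex.normSq (θ k) ^ cnt x k ∂μ : ℝ) : ℂ)
      = ∫ θ, ((∏ k, Complex.normSq (θ k) ^ cnt x k : ℝ) : ℂ) ∂μ from (integral_ofReal).symm]
  refine integral_congr_ae (Filter.Eventually.of_forall fun θ => ?_)
  dsimp only
  rw [tpow_eq_prod_pow, tpow_eq_prod_pow, ← h, Complex.mul_conj]
  norm_cast
  rw [map_prod Complex.normSq]
  exact Finset.prod_congr rfl fun k _ => (map_pow Complex.normSq _ _)

lemma F_unit_eq (hμ : IsHaarOnSphere μ) (hd : 1 ≤ d) {φ : Fin d → ℂ} (hφ : IsUnitVec φ) :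
    (∫ θ, (Complex.normSq (∑ k, conj (φ k) * θ k)) ^ n ∂μ)
      = ∫ θ, (Complex.normSq (θ (⟨0, hd⟩ : Fin d))) ^ n ∂μ := by
  classical
  obtain ⟨U, hU, hUe⟩ := exists_unitary_mulVec_eq hd hφ
  have hcont : Continuous fun θ : Fin d → ℂ =>
      (Complex.normSq (∑ k, conj (φ k) * θ k)) ^ n := by
    apply Continuous.pow
    exact Complex.continuous_normSq.comp (continuous_finset_sum _ fun k _ =>
      continuous_const.mul (continuous_apply k))
  rw [integral_unitary hμ hU hcont]
  refine integral_congr_ae (Filter.Eventually.of_forall fun θ => ?_)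
  have hsw : ∑ k, conj (φ k) * (U.mulVec θ) k = ∑ j, conj ((Uᴴ.mulVec φ) j) * θ j := by
    have hlhs : ∑ k, conj (φ k) * (U.mulVec θ) k
        = ∑ k, ∑ j, conj (φ k) * (U k j * θ j) := by
      refine Finset.sum_congr rfl fun k _ => ?_
      simp only [Matrix.mulVec, dotProduct, Finset.mul_sum]
    rw [hlhs, Finset.sum_comm]
    refine Finset.sum_congr rfl fun j _ => ?_
    simp only [Matrix.mulVec, dotProduct, map_sum, Finset.sum_mul,
      Matrix.conjTranspose_apply, RCLike.star_def, _root_.map_mul, Complex.conj_conj]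
    refine Finset.sum_congr rfl fun k _ => ?_
    ring
  have he₀ : Uᴴ.mulVec φ = (fun j : Fin d => if j = (⟨0, hd⟩ : Fin d) then 1 else 0) := by
    have h1 : Uᴴ = star U := (Matrix.star_eq_conjTranspose U).symm
    rw [h1, ← hUe, Matrix.mulVec_mulVec, (Unitary.mem_iff.mp hU).1, Matrix.one_mulVec]
  dsimp only
  rw [hsw, he₀]
  congr 2
  rw [Finset.sum_congr rfl (fun j _ => by
    by_cases hj : j = (⟨0, hd⟩ : Fin d) <;>
      simp [hj] :
    ∀ j ∈ Finset.univ, conj (if j = (⟨0, hd⟩ : Fin d) then (1:ℂ) else 0) * θ j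
      = if j = (⟨0, hd⟩ : Fin d) then θ j else 0)]
  rw [Finset.sum_ite_eq' Finset.univ _ θ]
  simp

lemma F_homog (hμ : IsHaarOnSphere μ) (hd : 1 ≤ d) (hn : 1 ≤ n) (ψ : Fin d → ℂ) :
    (∫ θ, (Complex.normSq (∑ k, conj (ψ k) * θ k)) ^ n ∂μ)
    = (∑ k, Complex.normSq (ψ k)) ^ n
      * ∫ θ, (Complex.normSq (θ (⟨0, hd⟩ : Fin d))) ^ n ∂μ := by
  classical
  by_cases hψ : ψ = 0
  · subst hψ
    have h0 : ∀ θ : Fin d → ℂ,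
        (Complex.normSq (∑ k, conj ((0 : Fin d → ℂ) k) * θ k)) ^ n = (0:ℝ) := by
      intro θ; simp [zero_pow (by omega : n ≠ 0)]
    rw [integral_congr_ae (Filter.Eventually.of_forall h0)]
    simp [zero_pow (by omega : n ≠ 0)]
  · set r : ℝ := Real.sqrt (∑ k, Complex.normSq (ψ k)) with hr
    have hsum_pos : 0 < ∑ k, Complex.normSq (ψ k) := by
      obtain ⟨k, hk⟩ : ∃ k, ψ k ≠ 0 := by
        by_contra hcon; push_neg at hcon; exact hψ (funext hcon)
      exact Finset.sum_pos' (fun i _ => Complex.normSq_nonneg _)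
        ⟨k, Finset.mem_univ k, Complex.normSq_pos.2 hk⟩
    have hrpos : 0 < r := Real.sqrt_pos.2 hsum_pos
    set φ : Fin d → ℂ := fun k => (r : ℂ)⁻¹ * ψ k with hφdef
    have hφ : IsUnitVec φ := by
      unfold IsUnitVec
      have hterm : ∀ k, Complex.normSq (φ k) = Complex.normSq (ψ k) / (r * r) := by
        intro k
        rw [hφdef]
        dsimp only
        rw [_root_.map_mul, Complex.normSq_inv, Complex.normSq_ofReal]
        ring
      rw [Finset.sum_congr rfl fun k _ => hterm k, ← Finset.sum_div, hr,
        Real.mul_self_sqrt hsum_pos.le, div_self hsum_pos.ne']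
    have hψφ : ∀ k, ψ k = (r : ℂ) * φ k := by
      intro k
      rw [hφdef]
      field_simp
    have hscale : ∀ θ : Fin d → ℂ,
        (Complex.normSq (∑ k, conj (ψ k) * θ k)) ^ n
        = (∑ k, Complex.normSq (ψ k)) ^ n
          * (Complex.normSq (∑ k, conj (φ k) * θ k)) ^ n := by
      intro θ
      have h1 : ∑ k, conj (ψ k) * θ k = (r:ℂ) * ∑ k, conj (φ k) * θ k := by
        rw [Finset.mul_sum]
        refine Finset.sum_congr rfl fun k _ => ?_
        rw [hψφ k, _root_.map_mul]
        have : conj ((r:ℝ):ℂ) = ((r:ℝ):ℂ) := Complex.conj_ofReal r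
        rw [this]; ring
      rw [h1, _root_.map_mul, mul_pow, Complex.normSq_ofReal, hr,
        Real.mul_self_sqrt hsum_pos.le]
    rw [integral_congr_ae (Filter.Eventually.of_forall hscale),
      MeasureTheory.integral_const_mul, F_unit_eq hμ hd hφ]

end Core2


section Core3
variable {d n : ℕ} {μ : Measure (Fin d → ℂ)}

lemma sum_pow_expand {R : Type*} [CommSemiring R] (g : Fin d → R) (n : ℕ) :
    (∑ k, g k) ^ n = ∑ x : Fin n → Fin d, ∏ i, g (x i) := by
  classical
  rw [Finset.sum_pow' Finset.univ g n, Fintype.piFinset_univ]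

lemma normSq_le_one_of_unit {θ : Fin d → ℂ} (h : IsUnitVec θ) (k : Fin d) :
    Complex.normSq (θ k) ≤ 1 := by
  rw [← h]
  exact Finset.single_le_sum (f := fun i => Complex.normSq (θ i))
    (fun i _ => Complex.normSq_nonneg _) (Finset.mem_univ k)

lemma entry_value (hμ : IsHaarOnSphere μ) (x y : Fin n → Fin d) :
    (∫ θ, tpow θ n x * conj (tpow θ n y) ∂μ)
    = if cnt x = cnt y
      then ((∫ θ, ∏ k, Complex.normSq (θ k) ^ cnt x k ∂μ : ℝ) : ℂ) else 0 := by
  by_cases h : cnt x = cnt y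
  · rw [if_pos h]; exact entry_eq_mtil x y h
  · rw [if_neg h]; exact phase_vanish hμ h

lemma F_expand (hμ : IsHaarOnSphere μ) (s : Fin d → ℝ) :
    ((∫ θ, (Complex.normSq (∑ k, conj ((s k : ℂ)) * θ k)) ^ n ∂μ : ℝ) : ℂ)
    = ∑ x : Fin n → Fin d, ∑ y : Fin n → Fin d,
        ((∏ i, s (x i) : ℝ) : ℂ) * ((∏ i, s (y i) : ℝ) : ℂ)
          * ∫ θ, tpow θ n x * conj (tpow θ n y) ∂μ := by
  classical
  rw [show (((∫ θ, (Complex.normSq (∑ k, conj ((s k:ℂ)) * θ k)) ^ n ∂μ : ℝ)) : ℂ)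
      = ∫ θ, (((Complex.normSq (∑ k, conj ((s k:ℂ)) * θ k)) ^ n : ℝ) : ℂ) ∂μ
    from (integral_ofReal).symm]
  have hint : ∀ θ : Fin d → ℂ,
      (((Complex.normSq (∑ k, conj ((s k:ℂ)) * θ k)) ^ n : ℝ) : ℂ)
      = ∑ x : Fin n → Fin d, ∑ y : Fin n → Fin d,
          ((∏ i, s (x i) : ℝ):ℂ) * ((∏ i, s (y i) : ℝ):ℂ)
            * (tpow θ n x * conj (tpow θ n y)) := by
    intro θ
    set z : ℂ := ∑ k, ((s k : ℂ)) * θ k with hz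
    have hzconj : ∑ k, conj ((s k:ℂ)) * θ k = z := by
      rw [hz]; exact Finset.sum_congr rfl fun k _ => by rw [Complex.conj_ofReal]
    rw [hzconj]
    have h1 : (((Complex.normSq z) ^ n : ℝ) : ℂ) = z ^ n * conj (z ^ n) := by
      rw [Complex.mul_conj, _root_.map_pow]
    rw [h1]
    have hzpow : z ^ n = ∑ x : Fin n → Fin d, ((∏ i, s (x i) : ℝ):ℂ) * tpow θ n x := by
      rw [hz, sum_pow_expand]
      refine Finset.sum_congr rfl fun x _ => ?_
      rw [tpow]
      push_cast
      rw [← Finset.prod_mul_distrib]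
    have hconj : conj (z ^ n)
        = ∑ y : Fin n → Fin d, ((∏ i, s (y i) : ℝ):ℂ) * conj (tpow θ n y) := by
      rw [hzpow, map_sum]
      exact Finset.sum_congr rfl fun y _ => by
        rw [_root_.map_mul, Complex.conj_ofReal]
    rw [hconj, hzpow, Finset.sum_mul_sum]
    exact Finset.sum_congr rfl fun x _ => Finset.sum_congr rfl fun y _ => by ring
  rw [integral_congr_ae (Filter.Eventually.of_forall hint)]
  rw [integral_finset_sum _ (fun x _ => integrable_finset_sum _
    (fun y _ => ((integrable_entry hμ x y).const_mul _)))]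
  refine Finset.sum_congr rfl fun x _ => ?_
  rw [integral_finset_sum _ (fun y _ => ((integrable_entry hμ x y).const_mul _))]
  exact Finset.sum_congr rfl fun y _ => MeasureTheory.integral_const_mul _ _

lemma integrable_mtil (hμ : IsHaarOnSphere μ) (x : Fin n → Fin d) :
    Integrable (fun θ => ∏ k, Complex.normSq (θ k) ^ cnt x k) μ := by
  refine integrable_of_unit_bound hμ ?_ (C := 1) ?_
  · exact continuous_finset_prod _ fun k _ =>
      (Complex.continuous_normSq.comp (continuous_apply k)).pow _
  · intro θ h
    rw [Real.norm_eq_abs, abs_of_nonneg (Finset.prod_nonneg fun k _ =>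
      pow_nonneg (Complex.normSq_nonneg _) _)]
    exact Finset.prod_le_one (fun k _ => pow_nonneg (Complex.normSq_nonneg _) _)
      (fun k _ => pow_le_one₀ (Complex.normSq_nonneg _) (normSq_le_one_of_unit h k))

lemma sum_mtil_eq_one (hμ : IsHaarOnSphere μ) :
    ∑ x : Fin n → Fin d, (∫ θ, ∏ k, Complex.normSq (θ k) ^ cnt x k ∂μ) = 1 := by
  classical
  haveI := hμ.1
  rw [← integral_finset_sum _ (fun x _ => integrable_mtil hμ x)]
  have hae : ∀ᵐ θ ∂μ,
      (∑ x : Fin n → Fin d, ∏ k, Complex.normSq (θ k) ^ cnt x k) = (1:ℝ) := by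
    filter_upwards [ae_unit hμ] with θ hθ
    have h1 : ∀ x : Fin n → Fin d,
        ∏ k, Complex.normSq (θ k) ^ cnt x k = ∏ i, Complex.normSq (θ (x i)) :=
      fun x => (prod_comp_cnt x fun k => Complex.normSq (θ k)).symm
    rw [Finset.sum_congr rfl fun x _ => h1 x,
      ← sum_pow_expand (fun k => Complex.normSq (θ k)) n, hθ, one_pow]
  rw [integral_congr_ae hae]
  simp

end Core3


section Core4
variable {d n : ℕ} {μ : Measure (Fin d → ℂ)}

def Ecnt (x : Fin n → Fin d) : Fin d →₀ ℕ := Finsupp.equivFunOnFinite.symm (cnt x)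

lemma Ecnt_apply (x : Fin n → Fin d) (k : Fin d) : Ecnt x k = cnt x k := rfl

lemma sum_ite_card {α : Type*} [Fintype α] (P : α → Prop) [DecidablePred P] (c : ℝ) :
    ∑ a, (if P a then c else 0) = ((Finset.univ.filter P).card : ℝ) * c := by
  rw [← Finset.sum_filter, Finset.sum_const, nsmul_eq_mul]

lemma moment_eq (hμ : IsHaarOnSphere μ) (hd : 1 ≤ d) (hn : 1 ≤ n) (x₀ : Fin n → Fin d) :
    ((Finset.univ.filter fun y : Fin n → Fin d => cnt y = cnt x₀).card : ℝ)
      * (∫ θ, ∏ k, Complex.normSq (θ k) ^ cnt x₀ k ∂μ)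
    = ∫ θ, (Complex.normSq (θ (⟨0, hd⟩ : Fin d))) ^ n ∂μ := by
  classical
  set lam : ℝ := ∫ θ, (Complex.normSq (θ (⟨0, hd⟩ : Fin d))) ^ n ∂μ with hlam
  set mt : (Fin n → Fin d) → ℝ :=
    fun x => ∫ θ, ∏ k, Complex.normSq (θ k) ^ cnt x k ∂μ with hmt
  have hmt_congr : ∀ {x x' : Fin n → Fin d}, cnt x = cnt x' → mt x = mt x' := by
    intro x x' h
    rw [hmt]
    dsimp only
    rw [h]
  have hiden : ∀ s : Fin d → ℝ,
      (∑ x : Fin n → Fin d, ∑ y : Fin n → Fin d,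
        if cnt x = cnt y then mt x * ∏ k, s k ^ (cnt x k + cnt y k) else 0)
      = lam * ∑ x : Fin n → Fin d, ∏ k, s k ^ (cnt x k + cnt x k) := by
    intro s
    have hC := F_expand (n := n) hμ s
    have hent : ∀ x y : Fin n → Fin d,
        ((∏ i, s (x i) : ℝ) : ℂ) * ((∏ i, s (y i) : ℝ) : ℂ)
          * ∫ θ, tpow θ n x * conj (tpow θ n y) ∂μ
        = (((if cnt x = cnt y then mt x * ∏ k, s k ^ (cnt x k + cnt y k) else 0 : ℝ)) : ℂ) := by
      intro x y
      rw [entry_value hμ x y]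
      by_cases h : cnt x = cnt y
      · rw [if_pos h, if_pos h]
        have hP : (∏ i, s (x i)) * (∏ i, s (y i)) = ∏ k, s k ^ (cnt x k + cnt y k) := by
          rw [prod_comp_cnt x s, prod_comp_cnt y s, ← Finset.prod_mul_distrib]
          exact Finset.prod_congr rfl fun k _ => (pow_add _ _ _).symm
        rw [← hP]
        push_cast
        ring
      · rw [if_neg h, if_neg h]
        push_cast
        ring
    rw [Finset.sum_congr rfl (fun x _ => Finset.sum_congr rfl fun y _ => hent x y)] at hC
    have hFh := F_homog hμ hd hn (fun k => ((s k : ℂ)))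
    have hsq : (∑ k, Complex.normSq ((s k : ℂ))) = ∑ k, s k * s k :=
      Finset.sum_congr rfl fun k _ => Complex.normSq_ofReal (s k)
    have hpow : (∑ k, s k * s k) ^ n
        = ∑ x : Fin n → Fin d, ∏ k, s k ^ (cnt x k + cnt x k) := by
      rw [sum_pow_expand (fun k => s k * s k) n]
      refine Finset.sum_congr rfl fun x _ => ?_
      rw [prod_comp_cnt x (fun k => s k * s k)]
      refine Finset.prod_congr rfl fun k _ => ?_
      rw [pow_add, mul_pow]
    rw [hFh, hsq, hpow] at hC
    have hC2 : ((∑ x : Fin n → Fin d, ∑ y : Fin n → Fin d,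
        if cnt x = cnt y then mt x * ∏ k, s k ^ (cnt x k + cnt y k) else 0 : ℝ) : ℂ)
        = ((lam * ∑ x : Fin n → Fin d, ∏ k, s k ^ (cnt x k + cnt x k) : ℝ) : ℂ) := by
      push_cast
      rw [← hC]
      push_cast
      ring
    exact_mod_cast hC2
  -- polynomial extraction
  set p : MvPolynomial (Fin d) ℝ := ∑ x : Fin n → Fin d, ∑ y : Fin n → Fin d,
    if cnt x = cnt y then MvPolynomial.monomial (Ecnt x + Ecnt y) (mt x) else 0 with hp
  set q : MvPolynomial (Fin d) ℝ := MvPolynomial.C lam *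
    ∑ x : Fin n → Fin d, MvPolynomial.monomial (Ecnt x + Ecnt x) 1 with hq
  have heval : ∀ (s : Fin d → ℝ) (x y : Fin n → Fin d) (c : ℝ),
      MvPolynomial.eval s (MvPolynomial.monomial (Ecnt x + Ecnt y) c)
      = c * ∏ k, s k ^ (cnt x k + cnt y k) := by
    intro s x y c
    rw [MvPolynomial.eval_monomial, Finsupp.prod_pow]
    exact congrArg (fun z => c * z) (Finset.prod_congr rfl fun k _ => by
      rw [Finsupp.add_apply, Ecnt_apply, Ecnt_apply])
  have hpq : p = q := by
    apply MvPolynomial.funext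
    intro s
    have hpe : MvPolynomial.eval s p = ∑ x : Fin n → Fin d, ∑ y : Fin n → Fin d,
        if cnt x = cnt y then mt x * ∏ k, s k ^ (cnt x k + cnt y k) else 0 := by
      rw [hp, map_sum]
      refine Finset.sum_congr rfl fun x _ => ?_
      rw [map_sum]
      refine Finset.sum_congr rfl fun y _ => ?_
      rw [apply_ite (MvPolynomial.eval s), heval, map_zero]
    have hqe : MvPolynomial.eval s q
        = lam * ∑ x : Fin n → Fin d, ∏ k, s k ^ (cnt x k + cnt x k) := by
      rw [hq, _root_.map_mul, MvPolynomial.eval_C, map_sum]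
      congr 1
      refine Finset.sum_congr rfl fun x _ => ?_
      rw [heval, one_mul]
    rw [hpe, hqe, hiden s]
  have hco := congrArg (MvPolynomial.coeff (Ecnt x₀ + Ecnt x₀)) hpq
  set N : ℕ := (Finset.univ.filter fun y : Fin n → Fin d => cnt y = cnt x₀).card with hN
  have hCiff : ∀ x y : Fin n → Fin d, cnt x = cnt y →
      ((Ecnt x + Ecnt y = Ecnt x₀ + Ecnt x₀) ↔ cnt x = cnt x₀) := by
    intro x y h1
    constructor
    · intro hC
      funext a
      have h2 := DFunLike.congr_fun hC a
      simp only [Finsupp.add_apply, Ecnt_apply] at h2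
      have h3 := congrFun h1 a
      omega
    · intro h2
      have h3 : cnt y = cnt x₀ := h1.symm.trans h2
      ext a
      simp only [Finsupp.add_apply, Ecnt_apply, h2, h3]
  have hCiff2 : ∀ x : Fin n → Fin d,
      ((Ecnt x + Ecnt x = Ecnt x₀ + Ecnt x₀) ↔ cnt x = cnt x₀) :=
    fun x => hCiff x x rfl
  have hL : MvPolynomial.coeff (Ecnt x₀ + Ecnt x₀) p = (N:ℝ) * ((N:ℝ) * mt x₀) := by
    rw [hp]
    rw [MvPolynomial.coeff_sum]
    have hterm : ∀ x y : Fin n → Fin d,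
        MvPolynomial.coeff (Ecnt x₀ + Ecnt x₀)
          (if cnt x = cnt y then MvPolynomial.monomial (Ecnt x + Ecnt y) (mt x) else 0)
        = if cnt x = cnt x₀ then (if cnt y = cnt x₀ then mt x₀ else 0) else 0 := by
      intro x y
      by_cases h1 : cnt x = cnt y
      · rw [if_pos h1, MvPolynomial.coeff_monomial]
        by_cases h2 : cnt x = cnt x₀
        · have h3 : cnt y = cnt x₀ := h1.symm.trans h2
          rw [if_pos ((hCiff x y h1).2 h2), if_pos h2, if_pos h3, hmt_congr h2]
        · rw [if_neg (fun hC => h2 ((hCiff x y h1).1 hC)), if_neg h2]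
      · rw [if_neg h1, MvPolynomial.coeff_zero]
        by_cases h2 : cnt x = cnt x₀
        · by_cases h3 : cnt y = cnt x₀
          · exact absurd (h2.trans h3.symm) h1
          · rw [if_pos h2, if_neg h3]
        · rw [if_neg h2]
    rw [Finset.sum_congr rfl fun x _ => ?_]
    · exact (sum_ite_card (fun x : Fin n → Fin d => cnt x = cnt x₀) ((N:ℝ) * mt x₀))
    · rw [MvPolynomial.coeff_sum,
        Finset.sum_congr rfl fun y _ => hterm x y]
      by_cases h2 : cnt x = cnt x₀
      · rw [if_pos h2]
        rw [Finset.sum_congr rfl fun y _ => if_pos h2]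
        exact sum_ite_card (fun y : Fin n → Fin d => cnt y = cnt x₀) (mt x₀)
      · rw [if_neg h2]
        rw [Finset.sum_congr rfl fun y _ => if_neg h2, Finset.sum_const_zero]
  have hR : MvPolynomial.coeff (Ecnt x₀ + Ecnt x₀) q = lam * (N:ℝ) := by
    rw [hq, MvPolynomial.coeff_C_mul, MvPolynomial.coeff_sum]
    congr 1
    have : ∀ x : Fin n → Fin d,
        MvPolynomial.coeff (Ecnt x₀ + Ecnt x₀)
          (MvPolynomial.monomial (Ecnt x + Ecnt x) (1:ℝ))
        = if cnt x = cnt x₀ then (1:ℝ) else 0 := by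
      intro x
      rw [MvPolynomial.coeff_monomial]
      by_cases h2 : cnt x = cnt x₀
      · rw [if_pos ((hCiff2 x).2 h2), if_pos h2]
      · rw [if_neg (fun hC => h2 ((hCiff2 x).1 hC)), if_neg h2]
    rw [Finset.sum_congr rfl fun x _ => this x, sum_ite_card, mul_one]
  rw [hL, hR] at hco
  have hNpos : 0 < N := by
    rw [hN]
    exact Finset.card_pos.2 ⟨x₀, Finset.mem_filter.2 ⟨Finset.mem_univ _, rfl⟩⟩
  have hNne : (N:ℝ) ≠ 0 := Nat.cast_ne_zero.2 hNpos.ne'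
  have := mul_left_cancel₀ hNne (hco.trans (by ring : lam * (N:ℝ) = (N:ℝ) * lam))
  rw [this]

end Core4


section Core5
variable {d n : ℕ} {μ : Measure (Fin d → ℂ)}

lemma lam_mul_choose (hμ : IsHaarOnSphere μ) (hd : 1 ≤ d) (hn : 1 ≤ n) :
    (∫ θ, (Complex.normSq (θ (⟨0, hd⟩ : Fin d))) ^ n ∂μ) * (((n + d - 1).choose n : ℕ) : ℝ)
    = 1 := by
  classical
  set lam : ℝ := ∫ θ, (Complex.normSq (θ (⟨0, hd⟩ : Fin d))) ^ n ∂μ with hlam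
  set Nt : (Fin d → ℕ) → ℕ :=
    fun t => (Finset.univ.filter fun y : Fin n → Fin d => cnt y = t).card with hNt
  have hmom : ∀ x : Fin n → Fin d,
      ((Nt (cnt x) : ℝ)) * (∫ θ, ∏ k, Complex.normSq (θ k) ^ cnt x k ∂μ) = lam :=
    fun x => moment_eq hμ hd hn x
  have hNpos : ∀ x : Fin n → Fin d, 0 < Nt (cnt x) := fun x =>
    Finset.card_pos.2 ⟨x, Finset.mem_filter.2 ⟨Finset.mem_univ _, rfl⟩⟩
  have hmt : ∀ x : Fin n → Fin d,
      (∫ θ, ∏ k, Complex.normSq (θ k) ^ cnt x k ∂μ) = lam * ((Nt (cnt x) : ℝ))⁻¹ := by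
    intro x
    have hNne : (Nt (cnt x) : ℝ) ≠ 0 := Nat.cast_ne_zero.2 (hNpos x).ne'
    field_simp
    linear_combination hmom x
  have hsum := sum_mtil_eq_one (hμ := hμ) (n := n) (d := d)
  rw [Finset.sum_congr rfl fun x _ => hmt x, ← Finset.mul_sum] at hsum
  have himg : ∑ x : Fin n → Fin d, ((Nt (cnt x) : ℝ))⁻¹
      = (((n + d - 1).choose n : ℕ) : ℝ) := by
    rw [Finset.sum_comp (fun t => ((Nt t : ℝ))⁻¹) cnt]
    have hone : ∀ t ∈ Finset.univ.image (cnt (n := n) (d := d)),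
        ((Finset.univ.filter fun x : Fin n → Fin d => cnt x = t).card) • ((Nt t : ℝ))⁻¹
        = 1 := by
      intro t ht
      rw [nsmul_eq_mul]
      obtain ⟨x, _, rfl⟩ := Finset.mem_image.1 ht
      have hNne : (Nt (cnt x) : ℝ) ≠ 0 := Nat.cast_ne_zero.2 (hNpos x).ne'
      rw [hNt]
      field_simp
    rw [Finset.sum_congr rfl hone, Finset.sum_const, card_image_cnt]
    simp
  rw [himg] at hsum
  linarith [hsum]

lemma Qentry (hμ : IsHaarOnSphere μ) (hd : 1 ≤ d) (hn : 1 ≤ n) (x y : Fin n → Fin d) :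
    (((n + d - 1).choose n : ℕ) : ℂ) * ∫ θ, tpow θ n x * conj (tpow θ n y) ∂μ
    = if cnt x = cnt y
      then ((((Finset.univ.filter fun z : Fin n → Fin d => cnt z = cnt x).card : ℝ))⁻¹ : ℂ)
      else 0 := by
  classical
  rw [entry_value hμ x y]
  by_cases h : cnt x = cnt y
  · rw [if_pos h, if_pos h]
    set N : ℕ := (Finset.univ.filter fun z : Fin n → Fin d => cnt z = cnt x).card with hN
    have h1 := moment_eq hμ hd hn x
    have h2 := lam_mul_choose hμ hd hn
    have hNpos : 0 < N :=
      Finset.card_pos.2 ⟨x, Finset.mem_filter.2 ⟨Finset.mem_univ _, rfl⟩⟩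
    have hNne : (N : ℝ) ≠ 0 := Nat.cast_ne_zero.2 hNpos.ne'
    have h3 : (N : ℝ) * ((((n + d - 1).choose n : ℕ) : ℝ)
        * (∫ θ, ∏ k, Complex.normSq (θ k) ^ cnt x k ∂μ)) = 1 := by
      linear_combination ((((n + d - 1).choose n : ℕ) : ℝ)) * h1 + h2
    have hreal : (((n + d - 1).choose n : ℕ) : ℝ)
        * (∫ θ, ∏ k, Complex.normSq (θ k) ^ cnt x k ∂μ) = ((N : ℝ))⁻¹ :=
      eq_inv_of_mul_eq_one_right h3
    calc (((n + d - 1).choose n : ℕ) : ℂ)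
          * ((∫ θ, ∏ k, Complex.normSq (θ k) ^ cnt x k ∂μ : ℝ) : ℂ)
        = (((((n + d - 1).choose n : ℕ) : ℝ)
            * (∫ θ, ∏ k, Complex.normSq (θ k) ^ cnt x k ∂μ) : ℝ) : ℂ) := by
          push_cast
          ring
      _ = (((N : ℝ))⁻¹ : ℂ) := by rw [hreal, Complex.ofReal_inv]
  · rw [if_neg h, if_neg h, mul_zero]

end Core5

/-- The projector onto the symmetric subspace of `(ℂ^d)^{⊗n}` equals
`c_{n,d} ∫ |θ⟩⟨θ|^{⊗n} dθ`, where `c_{n,d} = C(n+d−1, n)` and the integral is with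
respect to the Haar probability measure on the unit sphere of `ℂ^d`. -/
theorem symmetric_projector_eq_integral (d n : ℕ) (hd : 1 ≤ d) (hn : 1 ≤ n)
    (μ : Measure (Fin d → ℂ)) (hμ : IsHaarOnSphere μ)
    (Psym : Matrix (Fin n → Fin d) (Fin n → Fin d) ℂ)
    (hherm : Psym.IsHermitian) (hidem : Psym * Psym = Psym)
    (hrange : ∀ (v : (Fin n → Fin d) → ℂ) (σ : Equiv.Perm (Fin n)) (x : Fin n → Fin d),
      Psym.mulVec v (x ∘ σ) = Psym.mulVec v x)
    (hfix : ∀ v : (Fin n → Fin d) → ℂ,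
      (∀ (σ : Equiv.Perm (Fin n)) (x : Fin n → Fin d), v (x ∘ σ) = v x) →
      Psym.mulVec v = v) :
    Psym = ((n + d - 1).choose n : ℂ) • matIntegral μ (fun θ => tpowProj θ n) := by
  classical
  set Q : Matrix (Fin n → Fin d) (Fin n → Fin d) ℂ :=
    ((n + d - 1).choose n : ℂ) • matIntegral μ (fun θ => tpowProj θ n) with hQdef
  have hQent : ∀ x y : Fin n → Fin d, Q x y = if cnt x = cnt y
      then ((((Finset.univ.filter fun z : Fin n → Fin d => cnt z = cnt x).card : ℝ))⁻¹ : ℂ)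
      else 0 := by
    intro x y
    have hsm : Q x y = ((n + d - 1).choose n : ℂ)
        * ∫ θ, tpow θ n x * conj (tpow θ n y) ∂μ := by
      rw [hQdef, Matrix.smul_apply, smul_eq_mul]
      rfl
    rw [hsm]
    exact Qentry hμ hd hn x y
  have hcnt_perm : ∀ (x : Fin n → Fin d) (σ : Equiv.Perm (Fin n)), cnt (x ∘ σ) = cnt x :=
    fun x σ => funext (cnt_comp_perm x σ)
  have hQsymm : ∀ (σ : Equiv.Perm (Fin n)) (x y : Fin n → Fin d), Q (x ∘ σ) y = Q x y := by
    intro σ x y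
    rw [hQent, hQent, hcnt_perm x σ]
  have hPQ : Psym * Q = Q := by
    ext x y
    rw [Matrix.mul_apply]
    have hfixQ := hfix (fun z => Q z y) (fun σ x' => hQsymm σ x' y)
    calc ∑ z, Psym x z * Q z y = Psym.mulVec (fun z => Q z y) x := rfl
      _ = Q x y := by rw [hfixQ]
  have hQherm : Q.conjTranspose = Q := by
    ext x y
    rw [Matrix.conjTranspose_apply, hQent, hQent]
    by_cases h : cnt x = cnt y
    · rw [if_pos h.symm, if_pos h, ← h]
      simp
    · rw [if_neg (fun hh => h hh.symm), if_neg h]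
      simp
  have hQP : Q * Psym = Q := by
    have h1 := congrArg Matrix.conjTranspose hPQ
    rwa [Matrix.conjTranspose_mul, hherm.eq, hQherm] at h1
  have hQfix : ∀ v : (Fin n → Fin d) → ℂ,
      (∀ (σ : Equiv.Perm (Fin n)) (x : Fin n → Fin d), v (x ∘ σ) = v x) →
      Q.mulVec v = v := by
    intro v hv
    funext x
    show ∑ y, Q x y * v y = v x
    have hveq : ∀ y, cnt x = cnt y → v y = v x := by
      intro y h
      obtain ⟨σ, hσ⟩ := exists_perm_of_cnt_eq h.symm
      rw [hσ]
      exact hv σ x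
    set N : ℕ := (Finset.univ.filter fun z : Fin n → Fin d => cnt z = cnt x).card with hN
    have hNpos : 0 < N :=
      Finset.card_pos.2 ⟨x, Finset.mem_filter.2 ⟨Finset.mem_univ _, rfl⟩⟩
    have hterm : ∀ y : Fin n → Fin d, Q x y * v y
        = if cnt y = cnt x then (((N : ℝ))⁻¹ : ℂ) * v x else 0 := by
      intro y
      rw [hQent]
      by_cases h : cnt x = cnt y
      · rw [if_pos h, if_pos h.symm, hveq y h]
      · rw [if_neg h, if_neg (fun hh => h hh.symm), zero_mul]
    rw [Finset.sum_congr rfl fun y _ => hterm y, ← Finset.sum_filter,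
      Finset.sum_const, ← hN, nsmul_eq_mul]
    have hNne : ((N:ℝ) : ℂ) ≠ 0 := by
      simp only [ne_eq, Complex.ofReal_eq_zero, Nat.cast_eq_zero]
      exact hNpos.ne'
    rw [← mul_assoc]
    have hNC : ((N:ℕ):ℂ) * (((N : ℝ))⁻¹ : ℂ) = 1 := by
      push_cast
      field_simp
    rw [hNC, one_mul]
  have hQPsym : Q * Psym = Psym := by
    ext x y
    rw [Matrix.mul_apply]
    have hcol : ∀ (σ : Equiv.Perm (Fin n)) (z : Fin n → Fin d),
        Psym (z ∘ σ) y = Psym z y := by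
      intro σ z
      have h2 : ∀ w : Fin n → Fin d, (Psym *ᵥ Pi.single y (1:ℂ)) w = Psym w y := by
        intro w
        rw [Matrix.mulVec_single]
        exact mul_one _
      have h1 := hrange (Pi.single y 1) σ z
      rw [h2, h2] at h1
      exact h1
    have := hQfix (fun z => Psym z y) (fun σ z => hcol σ z)
    calc ∑ z, Q x z * Psym z y = Q.mulVec (fun z => Psym z y) x := rfl
      _ = Psym x y := by rw [this]
  calc Psym = Q * Psym := hQPsym.symm
    _ = Q := hQP
    _ = ((n + d - 1).choose n : ℂ) • matIntegral μ (fun θ => tpowProj θ n) := rfl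


end DeFinetti
end
end

section
/- Let n ≥ 1 and r ∈ {1,…,n} be integers, and let x ∈ [0,1] satisfy x ≥ 1 − r/(3n). Then Σ_{i ≥ r} binomial(n, i) · x^{n−i} · (1−x)^{i} ≤ exp(−r/3). -/
open Finset

/-- Let `n ≥ 1` and `r ∈ {1,…,n}` be integers, and let `x ∈ [0,1]` satisfy
`x ≥ 1 − r/(3n)`. Then `Σ_{i ≥ r} C(n,i) xⁿ⁻ⁱ (1−x)ⁱ ≤ exp(−r/3)`. -/
theorem binomial_tail_le (n r : ℕ) (hn : 1 ≤ n) (hr : 1 ≤ r) (hrn : r ≤ n)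
    (x : ℝ) (hx0 : 0 ≤ x) (hx1 : x ≤ 1) (hx : 1 - (r : ℝ) / (3 * n) ≤ x) :
    ∑ i ∈ Finset.Icc r n, (n.choose i : ℝ) * x ^ (n - i) * (1 - x) ^ i ≤
      Real.exp (-(r : ℝ) / 3) := by
  set p : ℝ := 1 - x with hp
  have hp0 : 0 ≤ p := by simp [hp]; linarith
  have hn0 : (0:ℝ) < n := by exact_mod_cast hn
  have hnp : (n : ℝ) * p ≤ (r : ℝ) / 3 := by
    have h1 : p ≤ (r : ℝ) / (3 * n) := by simp [hp]; linarith
    have h2 : (n : ℝ) * p ≤ (n : ℝ) * ((r : ℝ) / (3 * n)) :=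
      mul_le_mul_of_nonneg_left h1 (le_of_lt hn0)
    calc (n : ℝ) * p ≤ (n : ℝ) * ((r : ℝ) / (3 * n)) := h2
      _ = (r : ℝ) / 3 := by field_simp
  -- step 1: termwise bound
  have step1 : ∑ i ∈ Finset.Icc r n, (n.choose i : ℝ) * x ^ (n - i) * p ^ i ≤
      ∑ i ∈ Finset.Icc r n, (n.choose i : ℝ) * x ^ (n - i) * (3 * p) ^ i / 3 ^ r := by
    apply Finset.sum_le_sum
    intro i hi
    obtain ⟨hri, _⟩ := Finset.mem_Icc.mp hi
    have h3 : (3:ℝ) ^ r ≤ 3 ^ i := pow_le_pow_right₀ (by norm_num) hri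
    have ha : (0:ℝ) ≤ (n.choose i : ℝ) * x ^ (n - i) := by positivity
    rw [mul_pow, le_div_iff₀ (by positivity)]
    calc (n.choose i : ℝ) * x ^ (n - i) * p ^ i * 3 ^ r
        ≤ (n.choose i : ℝ) * x ^ (n - i) * p ^ i * 3 ^ i := by
          apply mul_le_mul_of_nonneg_left h3; positivity
      _ = (n.choose i : ℝ) * x ^ (n - i) * (3 ^ i * p ^ i) := by ring
  -- step 2: extend to full range
  have step2 : ∑ i ∈ Finset.Icc r n, (n.choose i : ℝ) * x ^ (n - i) * (3 * p) ^ i / 3 ^ r ≤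
      ∑ i ∈ Finset.range (n + 1), (n.choose i : ℝ) * x ^ (n - i) * (3 * p) ^ i / 3 ^ r := by
    apply Finset.sum_le_sum_of_subset_of_nonneg
    · intro i hi
      obtain ⟨_, hin⟩ := Finset.mem_Icc.mp hi
      exact Finset.mem_range.mpr (Nat.lt_succ_of_le hin)
    · intro i _ _
      positivity
  -- step 3: binomial theorem
  have step3 : ∑ i ∈ Finset.range (n + 1), (n.choose i : ℝ) * x ^ (n - i) * (3 * p) ^ i / 3 ^ r
      = (3 * p + x) ^ n / 3 ^ r := by
    rw [add_pow]
    rw [Finset.sum_div]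
    apply Finset.sum_congr rfl
    intro i _
    ring
  have hsum : (3 * p + x) = 1 + 2 * p := by simp [hp]; ring
  -- step 4: (1+2p)^n ≤ exp (2pn)
  have step4 : (1 + 2 * p) ^ n ≤ Real.exp (2 * p * n) := by
    calc (1 + 2 * p) ^ n ≤ (Real.exp (2 * p)) ^ n := by
          apply pow_le_pow_left₀ (by linarith)
          have := Real.add_one_le_exp (2 * p)
          linarith
      _ = Real.exp (2 * p * n) := by
          rw [← Real.exp_nat_mul]; ring_nf
  -- step 5: exp r ≤ 3^r
  have step5 : Real.exp (r : ℝ) ≤ 3 ^ r := by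
    rw [← Real.exp_one_rpow (r : ℝ)]
    rw [show ((3:ℝ) ^ r) = (3:ℝ) ^ (r:ℝ) by rw [Real.rpow_natCast]]
    apply Real.rpow_le_rpow (le_of_lt (Real.exp_pos 1)) _ (Nat.cast_nonneg r)
    have := Real.exp_one_lt_d9
    linarith
  have h3r : (0:ℝ) < 3 ^ r := by positivity
  have her : (0:ℝ) < Real.exp (r : ℝ) := Real.exp_pos _
  have final : (1 + 2 * p) ^ n / 3 ^ r ≤ Real.exp (-(r : ℝ) / 3) := by
    calc (1 + 2 * p) ^ n / 3 ^ r ≤ Real.exp (2 * p * n) / 3 ^ r := by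
          gcongr
      _ ≤ Real.exp (2 * p * n) / Real.exp (r : ℝ) := by
          gcongr
      _ = Real.exp (2 * p * n - r) := by rw [← Real.exp_sub]
      _ ≤ Real.exp (-(r : ℝ) / 3) := by
          apply Real.exp_le_exp.mpr
          have : 2 * p * n ≤ 2 * ((r : ℝ) / 3) := by nlinarith
          linarith
  calc ∑ i ∈ Finset.Icc r n, (n.choose i : ℝ) * x ^ (n - i) * (1 - x) ^ i
      ≤ (3 * p + x) ^ n / 3 ^ r := by
        rw [← step3]; exact le_trans step1 step2
    _ = (1 + 2 * p) ^ n / 3 ^ r := by rw [hsum]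
    _ ≤ Real.exp (-(r : ℝ) / 3) := final
end

section
/- Let n, k ≥ 1 and r ∈ {1,…,n} be integers. Then for all x ∈ [0,1], x^{k} · Σ_{i ≥ r} binomial(n, i) · x^{n−i} · (1−x)^{i} ≤ exp(−(r/3) · min{k/n, 1}). -/
open Finset

/-- Let `n, k ≥ 1` and `r ∈ {1,…,n}` be integers. Then for all `x ∈ [0,1]`,
`x^k · Σ_{i ≥ r} C(n,i) xⁿ⁻ⁱ (1−x)ⁱ ≤ exp(−(r/3) · min {k/n, 1})`. -/
theorem pow_mul_binomial_tail_le (n k r : ℕ) (hn : 1 ≤ n) (hk : 1 ≤ k)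
    (hr : 1 ≤ r) (hrn : r ≤ n) (x : ℝ) (hx0 : 0 ≤ x) (hx1 : x ≤ 1) :
    x ^ k * ∑ i ∈ Finset.Icc r n, (n.choose i : ℝ) * x ^ (n - i) * (1 - x) ^ i ≤
      Real.exp (-((r : ℝ) / 3) * min ((k : ℝ) / n) 1) := by
  have hn0 : (0:ℝ) < n := by exact_mod_cast hn
  have hr0 : (0:ℝ) ≤ r := Nat.cast_nonneg r
  have hrn' : (r:ℝ) ≤ n := by exact_mod_cast hrn
  set p : ℝ := 1 - x with hp
  have hp0 : 0 ≤ p := by simp [hp]; linarith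
  have hS0 : 0 ≤ ∑ i ∈ Finset.Icc r n, (n.choose i : ℝ) * x ^ (n - i) * p ^ i := by
    refine Finset.sum_nonneg fun i _ => by positivity
  have hxk0 : 0 ≤ x ^ k := pow_nonneg hx0 k
  have hxk1 : x ^ k ≤ 1 := pow_le_one₀ hx0 hx1
  have hsub : Finset.Icc r n ⊆ Finset.range (n+1) := by
    intro i hi
    simp only [Finset.mem_Icc] at hi
    simp only [Finset.mem_range]
    omega
  have hm1 : min ((k:ℝ)/n) 1 ≤ 1 := min_le_right _ _
  have hmk : min ((k:ℝ)/n) 1 ≤ (k:ℝ)/n := min_le_left _ _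
  have hA : -((r:ℝ)/3) ≤ -((r : ℝ) / 3) * min ((k : ℝ) / n) 1 := by nlinarith
  have hB : -((r:ℝ)*k/(3*n)) ≤ -((r : ℝ) / 3) * min ((k : ℝ) / n) 1 := by
    have h1 : ((r:ℝ)/3) * min ((k : ℝ) / n) 1 ≤ ((r:ℝ)/3) * ((k:ℝ)/n) := by
      refine mul_le_mul_of_nonneg_left hmk (by positivity)
    have h2 : ((r:ℝ)/3) * ((k:ℝ)/n) = (r:ℝ)*k/(3*n) := div_mul_div_comm _ _ _ _
    nlinarith
  rcases le_or_gt p ((r:ℝ)/(3*n)) with hcase | hcase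
  · -- Chernoff-style tail bound: S ≤ exp(-r + (e-1)r/3) ≤ exp(-r/3)
    have hnp : (n:ℝ) * p ≤ (r:ℝ)/3 := by
      calc (n:ℝ) * p ≤ n * ((r:ℝ)/(3*n)) := mul_le_mul_of_nonneg_left hcase hn0.le
        _ = r/3 := by field_simp
    have key : ∀ i ∈ Finset.Icc r n,
        (n.choose i : ℝ) * x ^ (n - i) * p ^ i ≤
        Real.exp (-(r:ℝ)) * ((Real.exp 1 * p) ^ i * x ^ (n - i) * (n.choose i : ℝ)) := by
      intro i hi
      simp only [Finset.mem_Icc] at hi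
      have hi' : (r:ℝ) ≤ i := by exact_mod_cast hi.1
      have hepow : (Real.exp 1 * p) ^ i = Real.exp i * p ^ i := by
        rw [mul_pow, ← Real.exp_one_rpow (i:ℝ), ← Real.rpow_natCast (Real.exp 1) i,
          Real.exp_one_rpow]
      rw [hepow]
      have h1 : (1:ℝ) ≤ Real.exp (-(r:ℝ)) * Real.exp i := by
        rw [← Real.exp_add]
        have : (0:ℝ) ≤ -(r:ℝ) + i := by linarith
        calc (1:ℝ) = Real.exp 0 := Real.exp_zero.symm
          _ ≤ _ := Real.exp_le_exp.mpr this
      have hA : 0 ≤ (n.choose i : ℝ) * x ^ (n - i) * p ^ i := by positivity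
      calc (n.choose i : ℝ) * x ^ (n - i) * p ^ i
          ≤ (Real.exp (-(r:ℝ)) * Real.exp i) * ((n.choose i : ℝ) * x ^ (n - i) * p ^ i) :=
            le_mul_of_one_le_left hA h1
        _ = Real.exp (-(r:ℝ)) * (Real.exp i * p ^ i * x ^ (n - i) * (n.choose i : ℝ)) := by ring
    have hsum1 : ∑ i ∈ Finset.Icc r n, (n.choose i : ℝ) * x ^ (n - i) * p ^ i ≤
        Real.exp (-(r:ℝ)) * ∑ i ∈ Finset.range (n+1),
          (Real.exp 1 * p) ^ i * x ^ (n - i) * (n.choose i : ℝ) := by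
      calc ∑ i ∈ Finset.Icc r n, (n.choose i : ℝ) * x ^ (n - i) * p ^ i
          ≤ ∑ i ∈ Finset.Icc r n,
              Real.exp (-(r:ℝ)) * ((Real.exp 1 * p) ^ i * x ^ (n - i) * (n.choose i : ℝ)) :=
            Finset.sum_le_sum key
        _ = Real.exp (-(r:ℝ)) * ∑ i ∈ Finset.Icc r n,
              (Real.exp 1 * p) ^ i * x ^ (n - i) * (n.choose i : ℝ) := by
            rw [Finset.mul_sum]
        _ ≤ _ := by
            refine mul_le_mul_of_nonneg_left ?_ (Real.exp_nonneg _)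
            refine Finset.sum_le_sum_of_subset_of_nonneg hsub fun i _ _ => ?_
            positivity
    have hbinom : ∑ i ∈ Finset.range (n+1),
        (Real.exp 1 * p) ^ i * x ^ (n - i) * (n.choose i : ℝ) = (Real.exp 1 * p + x) ^ n := by
      rw [add_pow]
    have hepx : Real.exp 1 * p + x ≤ Real.exp ((Real.exp 1 - 1) * p) := by
      have := Real.add_one_le_exp ((Real.exp 1 - 1) * p)
      have hx' : x = 1 - p := by simp [hp]
      nlinarith
    have hepx0 : 0 ≤ Real.exp 1 * p + x := by positivity
    have hpow : (Real.exp 1 * p + x) ^ n ≤ Real.exp ((Real.exp 1 - 1) * ((r:ℝ)/3)) := by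
      calc (Real.exp 1 * p + x) ^ n ≤ (Real.exp ((Real.exp 1 - 1) * p)) ^ n :=
            pow_le_pow_left₀ hepx0 hepx n
        _ = Real.exp ((n:ℝ) * ((Real.exp 1 - 1) * p)) := by
            rw [← Real.exp_nat_mul]
        _ ≤ Real.exp ((Real.exp 1 - 1) * ((r:ℝ)/3)) := by
            refine Real.exp_le_exp.mpr ?_
            have he1 : (1:ℝ) ≤ Real.exp 1 := by linarith [Real.add_one_le_exp (1:ℝ)]
            nlinarith
    have hS : ∑ i ∈ Finset.Icc r n, (n.choose i : ℝ) * x ^ (n - i) * p ^ i ≤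
        Real.exp (-(r:ℝ)/3) := by
      calc ∑ i ∈ Finset.Icc r n, (n.choose i : ℝ) * x ^ (n - i) * p ^ i
          ≤ Real.exp (-(r:ℝ)) * Real.exp ((Real.exp 1 - 1) * ((r:ℝ)/3)) := by
            refine hsum1.trans ?_
            rw [hbinom]
            exact mul_le_mul_of_nonneg_left hpow (Real.exp_nonneg _)
        _ = Real.exp (-(r:ℝ) + (Real.exp 1 - 1) * ((r:ℝ)/3)) := by rw [← Real.exp_add]
        _ ≤ Real.exp (-(r:ℝ)/3) := by
            refine Real.exp_le_exp.mpr ?_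
            have he3 : Real.exp 1 ≤ 3 := by
              linarith [Real.exp_one_lt_d9.le]
            nlinarith
    calc x ^ k * ∑ i ∈ Finset.Icc r n, (n.choose i : ℝ) * x ^ (n - i) * p ^ i
        ≤ 1 * Real.exp (-(r:ℝ)/3) := by
          exact mul_le_mul hxk1 hS hS0 (by norm_num)
      _ = Real.exp (-((r:ℝ)/3)) := by rw [one_mul, neg_div]
      _ ≤ _ := Real.exp_le_exp.mpr hA
  · -- small x case : x ≤ 1 - r/(3n)
    have hx' : x ≤ 1 - (r:ℝ)/(3*n) := by
      have : (r:ℝ)/(3*n) < 1 - x := hcase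
      linarith
    have hS1 : ∑ i ∈ Finset.Icc r n, (n.choose i : ℝ) * x ^ (n - i) * p ^ i ≤ 1 := by
      calc ∑ i ∈ Finset.Icc r n, (n.choose i : ℝ) * x ^ (n - i) * p ^ i
          = ∑ i ∈ Finset.Icc r n, p ^ i * x ^ (n - i) * (n.choose i : ℝ) := by
            refine Finset.sum_congr rfl fun i _ => by ring
        _ ≤ ∑ i ∈ Finset.range (n+1), p ^ i * x ^ (n - i) * (n.choose i : ℝ) :=
            Finset.sum_le_sum_of_subset_of_nonneg hsub fun i _ _ => by positivity
        _ = (p + x) ^ n := by rw [add_pow]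
        _ = 1 := by simp [hp]
    have hxkb : x ^ k ≤ Real.exp (-((r:ℝ)*k/(3*n))) := by
      have h1 : 1 - (r:ℝ)/(3*n) ≤ Real.exp (-((r:ℝ)/(3*n))) := by
        have := Real.add_one_le_exp (-((r:ℝ)/(3*n)))
        linarith
      calc x ^ k ≤ (1 - (r:ℝ)/(3*n)) ^ k := pow_le_pow_left₀ hx0 hx' k
        _ ≤ (Real.exp (-((r:ℝ)/(3*n)))) ^ k := by
            refine pow_le_pow_left₀ ?_ h1 k
            linarith [hx0, hx']
        _ = Real.exp ((k:ℝ) * (-((r:ℝ)/(3*n)))) := by rw [← Real.exp_nat_mul]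
        _ = Real.exp (-((r:ℝ)*k/(3*n))) := by ring_nf
    calc x ^ k * ∑ i ∈ Finset.Icc r n, (n.choose i : ℝ) * x ^ (n - i) * p ^ i
        ≤ Real.exp (-((r:ℝ)*k/(3*n))) * 1 := by
          exact mul_le_mul hxkb hS1 hS0 (Real.exp_nonneg _)
      _ = Real.exp (-((r:ℝ)*k/(3*n))) := mul_one _
      _ ≤ _ := Real.exp_le_exp.mpr hB
end
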